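/- arXiv:2504.15251 — 5 statements merged into one kernel-verified Lean document; each statement's English description precedes it below -/
import Mathlib

section
/- Let A be a probability distribution on points μ₁,…,μ_k ⊂ ℝ with weights w₁,…,w_k, and let p(x) = ∏_{i=1}^{k'}(x−μᵢ)² . Suppose E_{x~A}[p(x)] ≥ ‖p‖₁/2 and E_{x~A}[p(x)²] ≤ 2‖p‖₂², where ‖p‖_r denotes the L_r norm under N(0,1), and suppose ‖p‖₁ ≥ 3^{-2k'}‖p‖₂. Then the total weight of the points with index greater than k' satisfies Σ_{i=k'+1}^{k} wᵢ ≥ (1/8)·9^{-2k'}. -/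
open MeasureTheory ProbabilityTheory

lemma aux_abs_pow_exp_integrable (j : ℕ) :
    Integrable (fun x : ℝ => |x| ^ j * Real.exp (-(1/2) * x ^ 2)) := by
  have h : Integrable (fun x : ℝ => x ^ ((j:ℝ)) * Real.exp (-(1/2) * x ^ 2)) :=
    integrable_rpow_mul_exp_neg_mul_sq (by norm_num)
      (lt_of_lt_of_le neg_one_lt_zero (Nat.cast_nonneg j))
  refine h.abs.congr (Filter.Eventually.of_forall fun x => ?_)
  show |x ^ ((j:ℝ)) * Real.exp (-(1/2) * x ^ 2)| = |x| ^ j * Real.exp (-(1/2) * x ^ 2)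
  rw [abs_mul, abs_of_pos (Real.exp_pos _), Real.rpow_natCast, abs_pow]

lemma aux_poly_exp_integrable (n : ℕ) (M : ℝ) :
    Integrable (fun x : ℝ => (|x| + M) ^ n * Real.exp (-(1/2) * x ^ 2)) := by
  have key : (fun x : ℝ => (|x| + M) ^ n * Real.exp (-(1/2) * x ^ 2))
      = fun x => ∑ j ∈ Finset.range (n+1),
        (|x| ^ j * Real.exp (-(1/2) * x ^ 2)) * (M ^ (n - j) * (n.choose j : ℝ)) := by
    funext x
    rw [add_pow, Finset.sum_mul]
    exact Finset.sum_congr rfl fun j _ => by ring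
  rw [key]
  exact integrable_finset_sum _ fun j _ => (aux_abs_pow_exp_integrable j).mul_const _

lemma aux_prod_bound (m : ℕ) (c : Fin m → ℝ) (x : ℝ) :
    (∏ i, (x - c i) ^ 2) ^ 2 ≤ (|x| + ∑ i, |c i|) ^ (4 * m) := by
  set M := ∑ i, |c i| with hM
  have hM0 : 0 ≤ M := Finset.sum_nonneg fun i _ => abs_nonneg _
  calc (∏ i, (x - c i) ^ 2) ^ 2 = ∏ i, ((x - c i) ^ 2) ^ 2 := by
        rw [← Finset.prod_pow]
    _ ≤ ∏ i : Fin m, ((|x| + M) ^ 2) ^ 2 := by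
        apply Finset.prod_le_prod (fun i _ => by positivity)
        intro i _
        have h1 : |x - c i| ≤ |x| + M := by
          refine (abs_sub _ _).trans (add_le_add_right ?_ _)
          exact Finset.single_le_sum (fun j _ => abs_nonneg (c j)) (Finset.mem_univ i)
        have h2 : (x - c i) ^ 2 ≤ (|x| + M) ^ 2 := by
          rw [← sq_abs]
          exact pow_le_pow_left₀ (abs_nonneg _) h1 2
        exact pow_le_pow_left₀ (sq_nonneg _) h2 2
    _ = (|x| + M) ^ (4 * m) := by
        rw [Finset.prod_const, Finset.card_univ, Fintype.card_fin, ← pow_mul, ← pow_mul]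
        ring_nf

/-- If `p(x) = ∏_{i≤k'} (x-μᵢ)²`, `E_A[p] ≥ ‖p‖₁/2`, `E_A[p²] ≤ 2‖p‖₂²` and
`‖p‖₁ ≥ 3^(-2k') ‖p‖₂`, then the total weight of points of index `> k'` is at least
`(1/8)·9^(-2k')`. -/
theorem equal_weight_mass_lower_bound (k k' : ℕ) (hk : k' ≤ k)
    (μ : Fin k → ℝ) (w : Fin k → ℝ)
    (hwnn : ∀ i, 0 ≤ w i) (hsum : ∑ i, w i = 1) :
    let p : ℝ → ℝ := fun x => ∏ i : Fin k', (x - μ (Fin.castLE hk i)) ^ 2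
    let N1 := ∫ x, |p x| ∂(gaussianReal 0 1)
    let N2 := (∫ x, (p x) ^ 2 ∂(gaussianReal 0 1)) ^ ((1:ℝ)/2)
    N1 / 2 ≤ ∑ i, w i * p (μ i) →
    ∑ i, w i * (p (μ i)) ^ 2 ≤ 2 * N2 ^ 2 →
    (3:ℝ) ^ (-(2 * k' : ℝ)) * N2 ≤ N1 →
    (1/8) * (9:ℝ) ^ (-(2 * k' : ℝ)) ≤
      ∑ i ∈ Finset.univ.filter (fun i : Fin k => k' ≤ (i : ℕ)), w i := by
  intro p N1 N2 hE hQ h3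
  set γ := gaussianReal 0 1 with hγdef
  set c : Fin k' → ℝ := fun i => μ (Fin.castLE hk i) with hc
  have hpdef : ∀ x, p x = ∏ i, (x - c i) ^ 2 := fun x => rfl
  have hcont : Continuous p := by
    apply continuous_finset_prod
    exact fun i _ => (continuous_id.sub continuous_const).pow 2
  -- Integrability of p² with respect to the gaussian measure
  have hγeq : γ = volume.withDensity (gaussianPDF 0 1) :=
    gaussianReal_of_var_ne_zero 0 one_ne_zero
  have hint : Integrable (fun x => p x ^ 2) γ := by
    rw [hγeq, integrable_withDensity_iff (measurable_gaussianPDF 0 1)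
      (Filter.Eventually.of_forall fun x => ENNReal.ofReal_lt_top)]
    set M := ∑ i, |c i| with hMdef
    refine Integrable.mono' ((aux_poly_exp_integrable (4 * k') M).const_mul
      ((Real.sqrt (2 * Real.pi))⁻¹)) ?_ ?_
    · exact (((hcont.pow 2).measurable.mul
        (measurable_gaussianPDF 0 1).ennreal_toReal)).aestronglyMeasurable
    · refine Filter.Eventually.of_forall fun x => ?_
      have htr : (gaussianPDF 0 1 x).toReal = gaussianPDFReal 0 1 x :=
        ENNReal.toReal_ofReal (gaussianPDFReal_nonneg 0 1 x)
      rw [Real.norm_eq_abs, htr]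
      have hpdf : gaussianPDFReal 0 1 x
          = (Real.sqrt (2 * Real.pi))⁻¹ * Real.exp (-(1/2) * x ^ 2) := by
        unfold gaussianPDFReal
        simp only [NNReal.coe_one, sub_zero, mul_one]
        congr 1
        ring
      have h1 : |p x ^ 2 * gaussianPDFReal 0 1 x| = p x ^ 2 * gaussianPDFReal 0 1 x := by
        apply abs_of_nonneg
        exact mul_nonneg (sq_nonneg _) (gaussianPDFReal_nonneg 0 1 x)
      rw [h1, hpdf]
      have hb := aux_prod_bound k' c x
      rw [← hpdef x] at hb
      have hcinv : 0 ≤ (Real.sqrt (2 * Real.pi))⁻¹ := by positivity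
      calc p x ^ 2 * ((Real.sqrt (2 * Real.pi))⁻¹ * Real.exp (-(1/2) * x ^ 2))
          ≤ (|x| + M) ^ (4 * k') * ((Real.sqrt (2 * Real.pi))⁻¹
              * Real.exp (-(1/2) * x ^ 2)) := by
            apply mul_le_mul_of_nonneg_right hb (by positivity)
        _ = (Real.sqrt (2 * Real.pi))⁻¹
              * ((|x| + M) ^ (4 * k') * Real.exp (-(1/2) * x ^ 2)) := by ring
  -- Positivity of ∫ p²
  have hroots : γ (Set.range c) = 0 :=
    gaussianReal_absolutelyContinuous 0 one_ne_zero
      ((Set.finite_range c).countable.measure_zero _)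
  have hsupp : 0 < γ (Function.support fun x => p x ^ 2) := by
    by_contra h
    push_neg at h
    have h0 : γ (Function.support fun x => p x ^ 2) = 0 := le_antisymm h zero_le
    have hcover : (Set.univ : Set ℝ) ⊆ (Function.support fun x => p x ^ 2) ∪ Set.range c := by
      intro x _
      by_cases hx : x ∈ Set.range c
      · exact Or.inr hx
      · left
        have : 0 < p x := by
          rw [hpdef x]
        
          apply Finset.prod_pos
          intro i _
          have : x ≠ c i := fun hxe => hx ⟨i, hxe.symm⟩
          have : x - c i ≠ 0 := sub_ne_zero.mpr this
          positivity
        simp only [Function.mem_support]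
        positivity
    have h1 : (1 : ENNReal) ≤ 0 := by
      calc (1 : ENNReal) = γ Set.univ := (measure_univ).symm
        _ ≤ γ ((Function.support fun x => p x ^ 2) ∪ Set.range c) := measure_mono hcover
        _ ≤ γ (Function.support fun x => p x ^ 2) + γ (Set.range c) := measure_union_le _ _
        _ = 0 := by rw [h0, hroots, add_zero]
    simp at h1
  have hI : 0 < ∫ x, p x ^ 2 ∂γ :=
    (integral_pos_iff_support_of_nonneg_ae
      (Filter.Eventually.of_forall fun x => sq_nonneg _) hint).2 hsupp
  have hN2 : 0 < N2 := Real.rpow_pos_of_pos hI _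
  -- Cauchy–Schwarz part
  set S := Finset.univ.filter (fun i : Fin k => k' ≤ (i : ℕ)) with hS
  have hES : ∑ i ∈ S, w i * p (μ i) = ∑ i, w i * p (μ i) := by
    apply Finset.sum_filter_of_ne
    intro i _ hne
    by_contra hik
    push_neg at hik
    apply hne
    have : p (μ i) = 0 := by
      rw [hpdef]
      apply Finset.prod_eq_zero (Finset.mem_univ (⟨(i : ℕ), hik⟩ : Fin k'))
      have : c ⟨(i : ℕ), hik⟩ = μ i := by
        simp [hc, Fin.castLE]
      rw [this]
      simp
    rw [this, mul_zero]
  have hCS : (∑ i, w i * p (μ i)) ^ 2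
      ≤ (∑ i ∈ S, w i) * (∑ i ∈ S, w i * p (μ i) ^ 2) := by
    rw [← hES]
    exact Finset.sum_sq_le_sum_mul_sum_of_sq_eq_mul S (fun i _ => hwnn i)
      (fun i _ => mul_nonneg (hwnn i) (sq_nonneg _)) (fun i _ => by ring)
  have hQS : ∑ i ∈ S, w i * p (μ i) ^ 2 ≤ ∑ i, w i * p (μ i) ^ 2 :=
    Finset.sum_le_sum_of_subset_of_nonneg (Finset.filter_subset _ _)
      (fun i _ _ => mul_nonneg (hwnn i) (sq_nonneg _))
  set a := (3:ℝ) ^ (-(2 * k' : ℝ)) with ha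
  have hapos : 0 < a := Real.rpow_pos_of_pos (by norm_num) _
  have h9 : (9:ℝ) ^ (-(2 * k' : ℝ)) = a ^ 2 := by
    rw [ha, ← Real.rpow_natCast ((3:ℝ) ^ (-(2 * k' : ℝ))) 2,
      ← Real.rpow_mul (by norm_num : (0:ℝ) ≤ 3)]
    rw [show (9:ℝ) = (3:ℝ) ^ (2:ℝ) by
      rw [show (2:ℝ) = ((2:ℕ):ℝ) by norm_num, Real.rpow_natCast]; norm_num]
    rw [← Real.rpow_mul (by norm_num : (0:ℝ) ≤ 3)]
    ring_nf
  have hW0 : 0 ≤ ∑ i ∈ S, w i := Finset.sum_nonneg fun i _ => hwnn i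
  have hElb : a * N2 / 2 ≤ ∑ i, w i * p (μ i) := by
    have := h3
    linarith
  have hEpos : 0 < a * N2 / 2 := by positivity
  have hE2 : (a * N2 / 2) ^ 2 ≤ (∑ i, w i * p (μ i)) ^ 2 :=
    pow_le_pow_left₀ hEpos.le hElb 2
  have hchain : (a * N2 / 2) ^ 2 ≤ (∑ i ∈ S, w i) * (2 * N2 ^ 2) := by
    calc (a * N2 / 2) ^ 2 ≤ (∑ i, w i * p (μ i)) ^ 2 := hE2
      _ ≤ (∑ i ∈ S, w i) * (∑ i ∈ S, w i * p (μ i) ^ 2) := hCS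
      _ ≤ (∑ i ∈ S, w i) * (2 * N2 ^ 2) := by
          apply mul_le_mul_of_nonneg_left _ hW0
          exact hQS.trans hQ
  rw [h9]
  nlinarith [sq_nonneg N2, mul_pos hN2 hN2, sq_nonneg a]
end

section
/- Let p(x) = ∏_{i=1}^{k'}(x − μᵢ) with arbitrary μ₁,…,μ_{k'} ∈ ℝ, let t > 0, and let I = [0.9√(2t), 1.1√(2t)]. Then exp((1/|I|)∫_I ln|p(x)| dx) ≥ 2^{-Ck'} · max_{|y| ≤ √t} |p(y)| for some absolute constant C. -/
open MeasureTheory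

/-- `log` is integrable on `(0, c]`. -/
lemma integrableOn_log_Ioc (c : ℝ) (hc : 0 ≤ c) :
    MeasureTheory.IntegrableOn Real.log (Set.Ioc 0 c) := by
  have hg : MeasureTheory.IntegrableOn
      (fun x : ℝ => (2 + 2*c) * x ^ (-(1/2) : ℝ)) (Set.Ioc 0 c) := by
    have h := (intervalIntegral.intervalIntegrable_rpow' (a := 0) (b := c)
      (r := -(1/2)) (by norm_num)).const_mul (2 + 2*c)
    rwa [intervalIntegrable_iff_integrableOn_Ioc_of_le hc] at h
  refine hg.mono' Real.measurable_log.aestronglyMeasurable ?_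
  refine (MeasureTheory.ae_restrict_iff' measurableSet_Ioc).2 (MeasureTheory.ae_of_all _ ?_)
  intro x hx
  obtain ⟨hx0, hxc⟩ := hx
  have hs : 0 < x ^ (-(1/2) : ℝ) := Real.rpow_pos_of_pos hx0 _
  have hs' : 0 < x ^ ((1/2) : ℝ) := Real.rpow_pos_of_pos hx0 _
  have hmul : x ^ ((1/2) : ℝ) * x ^ (-(1/2) : ℝ) = 1 := by
    rw [← Real.rpow_add hx0]; norm_num
  have hcpos : (0:ℝ) ≤ 2 + 2*c := by linarith
  rw [Real.norm_eq_abs]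
  rcases le_or_gt x 1 with hx1 | hx1
  · have hlog : Real.log x ≤ 0 := Real.log_nonpos hx0.le hx1
    rw [abs_of_nonpos hlog]
    have h1 : Real.log (x ^ (-(1/2) : ℝ)) = -(1/2) * Real.log x := Real.log_rpow hx0 _
    have h2 : Real.log (x ^ (-(1/2) : ℝ)) ≤ x ^ (-(1/2) : ℝ) - 1 :=
      Real.log_le_sub_one_of_pos hs
    nlinarith
  · have hlog : 0 ≤ Real.log x := Real.log_nonneg hx1.le
    rw [abs_of_nonneg hlog]
    have h1 : Real.log (x ^ ((1/2) : ℝ)) = (1/2) * Real.log x := Real.log_rpow hx0 _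
    have h2 : Real.log (x ^ ((1/2) : ℝ)) ≤ x ^ ((1/2) : ℝ) - 1 :=
      Real.log_le_sub_one_of_pos hs'
    -- log x ≤ 2 * x^(1/2) and 2 * x^(1/2) ≤ (2+2c) * x^(-1/2)
    have h3 : Real.log x ≤ 2 * x ^ ((1/2) : ℝ) := by nlinarith
    have hxx : x ^ ((1/2) : ℝ) * x ^ ((1/2) : ℝ) = x := by
      rw [← Real.rpow_add hx0]; norm_num
    have hsr : x ^ ((1/2) : ℝ) = x * x ^ (-(1/2) : ℝ) := by
      calc x ^ ((1/2) : ℝ) = x ^ ((1/2) : ℝ) * (x ^ ((1/2) : ℝ) * x ^ (-(1/2) : ℝ)) := by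
            rw [hmul, mul_one]
        _ = (x ^ ((1/2) : ℝ) * x ^ ((1/2) : ℝ)) * x ^ (-(1/2) : ℝ) := by ring
        _ = x * x ^ (-(1/2) : ℝ) := by rw [hxx]
    have h4 : 2 * x ^ ((1/2) : ℝ) ≤ (2 + 2*c) * x ^ (-(1/2) : ℝ) := by
      rw [hsr]
      nlinarith [mul_le_mul_of_nonneg_right (show 2*x ≤ 2+2*c by linarith) hs.le]
    linarith

/-- `log` is interval integrable on any interval. -/
lemma intervalIntegrable_log'' (a b : ℝ) : IntervalIntegrable Real.log volume a b := by
  have Hpos : ∀ c : ℝ, 0 ≤ c → IntervalIntegrable Real.log volume 0 c := by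
    intro c hc
    rw [intervalIntegrable_iff_integrableOn_Ioc_of_le hc]
    exact integrableOn_log_Ioc c hc
  have H : ∀ c : ℝ, IntervalIntegrable Real.log volume 0 c := by
    intro c
    rcases le_total 0 c with hc | hc
    · exact Hpos c hc
    · rw [IntervalIntegrable.iff_comp_neg, neg_zero]
      simp only [Real.log_neg_eq_log]
      exact Hpos (-c) (by linarith)
  exact (H a).symm.trans (H b)

lemma intervalIntegrable_log_sub (a b c : ℝ) :
    IntervalIntegrable (fun x => Real.log (x - c)) volume a b := by
  have h := (intervalIntegrable_log'' (a - c) (b - c)).comp_sub_right c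
  simpa using h

/-- Antiderivative formula for `log`, valid across the singularity. -/
lemma integral_log_eq (u v : ℝ) :
    ∫ x in u..v, Real.log x = (v * Real.log v - v) - (u * Real.log u - u) := by
  have key : ∀ w : ℝ, 0 ≤ w → ∫ x in (0:ℝ)..w, Real.log x = w * Real.log w - w := by
    intro w hw
    have hcont : ContinuousOn (fun x : ℝ => x * Real.log x - x) (Set.Icc 0 w) :=
      (Real.continuous_mul_log.sub continuous_id).continuousOn
    have hderiv : ∀ x ∈ Set.Ioo (0:ℝ) w,
        HasDerivAt (fun x : ℝ => x * Real.log x - x) (Real.log x) x := by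
      intro x hx
      have h1 : HasDerivAt (fun x : ℝ => x * Real.log x) (1 * Real.log x + x * x⁻¹) x :=
        (hasDerivAt_id x).mul (Real.hasDerivAt_log hx.1.ne')
      have h2 := h1.sub (hasDerivAt_id x)
      have h3 : Real.log x = 1 * Real.log x + x * x⁻¹ - 1 := by
        rw [mul_inv_cancel₀ hx.1.ne']
        ring
      rw [h3]; exact h2
    have h := intervalIntegral.integral_eq_sub_of_hasDeriv_right_of_le hw hcont
      (fun x hx => (hderiv x hx).hasDerivWithinAt) (intervalIntegrable_log'' 0 w)
    simpa using h
  have key' : ∀ w : ℝ, ∫ x in (0:ℝ)..w, Real.log x = w * Real.log w - w := by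
    intro w
    rcases le_total 0 w with hw | hw
    · exact key w hw
    · have hcont : ContinuousOn (fun x : ℝ => x * Real.log x - x) (Set.Icc w 0) :=
        (Real.continuous_mul_log.sub continuous_id).continuousOn
      have hderiv : ∀ x ∈ Set.Ioo w (0:ℝ),
          HasDerivAt (fun x : ℝ => x * Real.log x - x) (Real.log x) x := by
        intro x hx
        have h1 : HasDerivAt (fun x : ℝ => x * Real.log x) (1 * Real.log x + x * x⁻¹) x :=
          (hasDerivAt_id x).mul (Real.hasDerivAt_log hx.2.ne)
        have h2 := h1.sub (hasDerivAt_id x)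
        have h3 : Real.log x = 1 * Real.log x + x * x⁻¹ - 1 := by
          rw [mul_inv_cancel₀ hx.2.ne]
          ring
        rw [h3]; exact h2
      have h := intervalIntegral.integral_eq_sub_of_hasDeriv_right_of_le hw hcont
        (fun x hx => (hderiv x hx).hasDerivWithinAt) (intervalIntegrable_log'' w 0)
      rw [intervalIntegral.integral_symm]
      rw [h]
      simp
  have h1 := intervalIntegral.integral_add_adjacent_intervals
    (intervalIntegrable_log'' u 0) (intervalIntegrable_log'' 0 v)
  have h2 : ∫ x in u..(0:ℝ), Real.log x = -(u * Real.log u - u) := by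
    rw [intervalIntegral.integral_symm, key' u]
  rw [← h1, h2, key' v]
  ring

/-- Key convexity bound: the integral of `log` over any interval of length `h`
is at least its value over the symmetric interval `[-h/2, h/2]`. -/
lemma integral_log_ge (u h : ℝ) (hh : 0 < h) :
    h * (Real.log (h/2) - 1) ≤ ∫ x in u..(u+h), Real.log x := by
  have hS : ∫ x in (-(h/2))..(h/2), Real.log x = h * (Real.log (h/2) - 1) := by
    rw [integral_log_eq, Real.log_neg_eq_log]
    ring
  have hx0 : ∀ᵐ x : ℝ ∂volume, x ≠ 0 := by
    have : volume ({0} : Set ℝ) = 0 := measure_singleton 0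
    rw [← MeasureTheory.compl_mem_ae_iff] at this
    filter_upwards [this] with x hx
    simpa using hx
  have hxh : ∀ᵐ x : ℝ ∂volume, x ≠ -h := by
    have : volume ({-h} : Set ℝ) = 0 := measure_singleton _
    rw [← MeasureTheory.compl_mem_ae_iff] at this
    filter_upwards [this] with x hx
    simpa using hx
  rcases le_total (-(h/2)) u with hu | hu
  · -- shifted right of symmetric interval
    have hshift : ∫ x in (h/2)..(u+h), Real.log x
        = ∫ x in (-(h/2))..u, Real.log (x + h) := by
      rw [intervalIntegral.integral_comp_add_right (fun x => Real.log x) h]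
      congr 1
      ring
    have hmono : ∫ x in (-(h/2))..u, Real.log x ≤ ∫ x in (-(h/2))..u, Real.log (x + h) := by
      apply intervalIntegral.integral_mono_ae_restrict hu (intervalIntegrable_log'' _ _)
      · have h' := (intervalIntegrable_log'' (-(h/2) + h) (u + h)).comp_add_right h
        simpa using h'
      · refine Filter.Eventually.mp (MeasureTheory.ae_restrict_mem measurableSet_Icc)
          (Filter.Eventually.mono (MeasureTheory.ae_restrict_of_ae hx0) ?_)
        intro x hx hmem
        obtain ⟨hx1, hx2⟩ := hmem
        have habs : 0 < |x| := abs_pos.2 hx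
        have hle : |x| ≤ x + h := by
          rcases le_or_gt 0 x with hx0' | hx0'
          · rw [abs_of_nonneg hx0']; linarith
          · rw [abs_of_neg hx0']; linarith
        calc Real.log x = Real.log |x| := (Real.log_abs x).symm
          _ ≤ Real.log (x + h) := Real.log_le_log habs hle
    have e1 := integral_log_eq (-(h/2)) (h/2)
    have e2 := integral_log_eq u (u+h)
    have e3 := integral_log_eq (-(h/2)) u
    have e4 := integral_log_eq (h/2) (u+h)
    rw [hshift] at e4
    linarith
  · -- shifted left of symmetric interval
    have hshift : ∫ x in (u+h)..(h/2), Real.log x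
        = ∫ x in u..(-(h/2)), Real.log (x + h) := by
      rw [intervalIntegral.integral_comp_add_right (fun x => Real.log x) h]
      congr 1
      ring
    have hmono : ∫ x in u..(-(h/2)), Real.log (x + h) ≤ ∫ x in u..(-(h/2)), Real.log x := by
      apply intervalIntegral.integral_mono_ae_restrict hu
      · have h' := (intervalIntegrable_log'' (u + h) (-(h/2) + h)).comp_add_right h
        simpa using h'
      · exact intervalIntegrable_log'' _ _
      · refine Filter.Eventually.mp (MeasureTheory.ae_restrict_mem measurableSet_Icc)
          (Filter.Eventually.mono (MeasureTheory.ae_restrict_of_ae hxh) ?_)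
        intro x hx hmem
        obtain ⟨hx1, hx2⟩ := hmem
        have hxneg : x < 0 := lt_of_le_of_lt hx2 (by linarith)
        have habs : 0 < |x + h| := abs_pos.2 (fun hc => hx (by linarith))
        have hle : |x + h| ≤ |x| := by
          rw [abs_of_neg hxneg, abs_le]
          constructor <;> linarith
        calc Real.log (x + h) = Real.log |x + h| := (Real.log_abs _).symm
          _ ≤ Real.log |x| := Real.log_le_log habs hle
          _ = Real.log x := Real.log_abs x
    have e1 := integral_log_eq (-(h/2)) (h/2)
    have e2 := integral_log_eq u (u+h)
    have e3 := integral_log_eq u (-(h/2))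
    have e4 := integral_log_eq (u+h) (h/2)
    rw [hshift] at e4
    linarith
  
/-- Per-root estimate: the integral of `log |x - a|` over `[0.9L, 1.1L]` is at least
`0.2L * (log |y - a| - 5)` for any `|y| ≤ L`. -/
lemma root_bound (L a y : ℝ) (hL : 0 < L) (hy : |y| ≤ L) (hne : y ≠ a) :
    0.2*L * (Real.log |y - a| - 5) ≤ ∫ x in (0.9*L)..(1.1*L), Real.log |x - a| := by
  have hint : ∫ x in (0.9*L)..(1.1*L), Real.log |x - a| = ∫ x in (0.9*L)..(1.1*L), Real.log (x - a) := by
    simp only [Real.log_abs]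
  rw [hint]
  have hd : 0 < |y - a| := abs_pos.2 (sub_ne_zero.2 hne)
  have hle : (0.9:ℝ)*L ≤ 1.1*L := by nlinarith
  rcases le_or_gt (5*L) |y - a| with hbig | hsmall
  · -- far root: pointwise bound
    have hpt : ∀ x ∈ Set.Icc (0.9*L) (1.1*L),
        Real.log |y - a| - Real.log 2 ≤ Real.log (x - a) := by
      intro x hx
      obtain ⟨hx1, hx2⟩ := hx
      have hxy : |x - y| ≤ 2.1 * L := by
        have h1 : |x| ≤ 1.1 * L := by
          rw [abs_le]; constructor <;> nlinarith
        calc |x - y| ≤ |x| + |y| := abs_sub x y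
          _ ≤ 2.1 * L := by linarith
      have htri : |y - a| ≤ |y - x| + |x - a| := abs_sub_le y x a
      have hxa : |y - a| / 2 ≤ |x - a| := by
        rw [abs_sub_comm y x] at htri
        nlinarith
      calc Real.log |y - a| - Real.log 2 = Real.log (|y - a| / 2) := by
            rw [Real.log_div hd.ne' (by norm_num)]
        _ ≤ Real.log |x - a| := Real.log_le_log (by positivity) hxa
        _ = Real.log (x - a) := Real.log_abs _
    have hmono := intervalIntegral.integral_mono_on hle
      (intervalIntegrable_const (c := Real.log |y - a| - Real.log 2))
      (intervalIntegrable_log_sub _ _ a) hpt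
    rw [intervalIntegral.integral_const] at hmono
    have hlog2 : Real.log 2 ≤ 5 := by
      have := Real.log_le_sub_one_of_pos (by norm_num : (0:ℝ) < 2)
      linarith
    have : ((1.1*L) - (0.9*L)) • (Real.log |y - a| - Real.log 2)
        = 0.2*L * (Real.log |y - a| - Real.log 2) := by
      rw [smul_eq_mul]; ring
    rw [this] at hmono
    nlinarith [Real.log_nonneg (show (1:ℝ) ≤ 2 by norm_num)]
  · -- near root: use the convexity bound
    have hcomp : ∫ x in (0.9*L)..(1.1*L), Real.log (x - a)
        = ∫ x in (0.9*L - a)..(1.1*L - a), Real.log x := by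
      rw [← intervalIntegral.integral_comp_sub_right (fun x => Real.log x) a]
    have hkey := integral_log_ge (0.9*L - a) (0.2*L) (by nlinarith)
    have heq : (0.9*L - a) + 0.2*L = 1.1*L - a := by ring
    rw [heq] at hkey
    rw [hcomp]
    refine le_trans ?_ hkey
    have h50 : Real.log (5*L) ≤ Real.log (0.2*L/2) + 4 := by
      have hq : (5*L) / (0.2*L/2) = 50 := by
        field_simp
        ring
      have hlog50 : Real.log (5*L) - Real.log (0.2*L/2) = Real.log 50 := by
        rw [← Real.log_div (by positivity) (by positivity), hq]
      have h4 : Real.log 50 ≤ 4 := by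
        rw [Real.log_le_iff_le_exp (by norm_num)]
        have he : Real.exp (4:ℝ) = Real.exp 1 ^ (4:ℕ) := by
          rw [← Real.exp_nat_mul]; norm_num
        rw [he]
        have h27 : (2.7:ℝ) ^ (4:ℕ) ≤ Real.exp 1 ^ (4:ℕ) :=
          pow_le_pow_left₀ (by norm_num) (le_trans (by norm_num) Real.exp_one_gt_d9.le) 4
        nlinarith
      linarith
    have hyd : Real.log |y - a| ≤ Real.log (5*L) := Real.log_le_log hd hsmall.le
    nlinarith [h50, hyd]

/-- For `p(x) = ∏ (x − μᵢ)` with `k'` roots, the geometric mean of `|p|` over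
`I = [0.9√(2t), 1.1√(2t)]` is at least `2^(-Ck')` times `|p(y)|` for any `|y| ≤ √t`. -/
theorem geometric_mean_lower_bound :
    ∃ C : ℝ, 0 < C ∧ ∀ (k' : ℕ) (μ : Fin k' → ℝ) (t : ℝ), 0 < t →
      ∀ y : ℝ, |y| ≤ Real.sqrt t →
        (2:ℝ) ^ (-(C * k')) * |∏ i, (y - μ i)| ≤
          Real.exp ((0.2 * Real.sqrt (2 * t))⁻¹ *
            ∫ x in Set.Icc (0.9 * Real.sqrt (2 * t)) (1.1 * Real.sqrt (2 * t)),
              Real.log |∏ i, (x - μ i)|) := by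
  refine ⟨8, by norm_num, ?_⟩
  intro k' μ t ht y hy
  set L := Real.sqrt (2*t) with hLdef
  have hL : 0 < L := Real.sqrt_pos.2 (by linarith)
  have hyL : |y| ≤ L := hy.trans (Real.sqrt_le_sqrt (by linarith))
  have hle : (0.9:ℝ)*L ≤ 1.1*L := by nlinarith
  have hIcc : (∫ x in Set.Icc (0.9*L) (1.1*L), Real.log |∏ i, (x - μ i)|)
      = ∫ x in (0.9*L)..(1.1*L), Real.log |∏ i, (x - μ i)| := by
    rw [intervalIntegral.integral_of_le hle, ← MeasureTheory.integral_Icc_eq_integral_Ioc]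
  rw [hIcc]
  by_cases hzero : ∃ i, y = μ i
  · obtain ⟨i, hi⟩ := hzero
    have hz : ∏ i, (y - μ i) = 0 :=
      Finset.prod_eq_zero (Finset.mem_univ i) (by rw [hi]; ring)
    rw [hz]
    simpa using (Real.exp_pos _).le
  push_neg at hzero
  have hne : ∀ i, y - μ i ≠ 0 := fun i => sub_ne_zero.2 (hzero i)
  have hPpos : 0 < |∏ i, (y - μ i)| :=
    abs_pos.2 (Finset.prod_ne_zero_iff.2 fun i _ => hne i)
  -- split the integral as a sum over roots
  have hae : ∀ᵐ x : ℝ ∂volume, x ∈ Set.uIoc (0.9*L) (1.1*L) →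
      Real.log |∏ i, (x - μ i)| = ∑ i, Real.log |x - μ i| := by
    have hnull : volume (⋃ i : Fin k', ({μ i} : Set ℝ)) = 0 :=
      measure_iUnion_null fun i => measure_singleton _
    rw [← MeasureTheory.compl_mem_ae_iff] at hnull
    filter_upwards [hnull] with x hx _
    have hxne : ∀ i, x - μ i ≠ 0 := by
      intro i
      simp only [Set.compl_iUnion, Set.mem_iInter, Set.mem_compl_iff,
        Set.mem_singleton_iff] at hx
      exact sub_ne_zero.2 (hx i)
    rw [Finset.abs_prod, Real.log_prod (fun i _ => abs_ne_zero.2 (hxne i))]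
  have hsplit : ∫ x in (0.9*L)..(1.1*L), Real.log |∏ i, (x - μ i)|
      = ∑ i, ∫ x in (0.9*L)..(1.1*L), Real.log |x - μ i| := by
    rw [intervalIntegral.integral_congr_ae hae]
    apply intervalIntegral.integral_finset_sum
    intro i _
    have h := intervalIntegrable_log_sub (0.9*L) (1.1*L) (μ i)
    simpa only [Real.log_abs] using h
  rw [hsplit]
  -- per-root lower bounds
  have hsum : ∑ i, (0.2*L * (Real.log |y - μ i| - 5))
      ≤ ∑ i, ∫ x in (0.9*L)..(1.1*L), Real.log |x - μ i| :=
    Finset.sum_le_sum fun i _ => root_bound L (μ i) y hL hyL (hzero i)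
  have hlogP : Real.log |∏ i, (y - μ i)| = ∑ i, Real.log |y - μ i| := by
    rw [Finset.abs_prod, Real.log_prod (fun i _ => abs_ne_zero.2 (hne i))]
  have hsum2 : ∑ i, (0.2*L * (Real.log |y - μ i| - 5))
      = 0.2*L * (Real.log |∏ i, (y - μ i)| - 5*k') := by
    rw [← Finset.mul_sum]
    congr 1
    rw [Finset.sum_sub_distrib, hlogP, Finset.sum_const, Finset.card_univ]
    simp [mul_comm]
  rw [hsum2] at hsum
  -- assemble
  have h02 : (0:ℝ) < 0.2*L := by nlinarith
  have harg : Real.log |∏ i, (y - μ i)| - 5*k'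
      ≤ (0.2*L)⁻¹ * ∑ i, ∫ x in (0.9*L)..(1.1*L), Real.log |x - μ i| := by
    have := mul_le_mul_of_nonneg_left hsum (inv_nonneg.2 h02.le)
    rwa [inv_mul_cancel_left₀ h02.ne'] at this
  have hexp := Real.exp_le_exp.2 harg
  refine le_trans ?_ hexp
  rw [Real.exp_sub, Real.exp_log hPpos]
  rw [div_eq_mul_inv, ← Real.exp_neg]
  rw [mul_comm (|∏ i, (y - μ i)|)]
  have hrpow : (2:ℝ) ^ (-((8:ℝ) * k')) = Real.exp (Real.log 2 * (-((8:ℝ) * k'))) := by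
    exact Real.rpow_def_of_pos (by norm_num) _
  rw [hrpow]
  have hmono : Real.exp (Real.log 2 * (-((8:ℝ) * k'))) ≤ Real.exp (-((5:ℝ)*k')) := by
    rw [Real.exp_le_exp]
    have hk : (0:ℝ) ≤ (k' : ℝ) := Nat.cast_nonneg k'
    nlinarith [Real.log_two_gt_d9]
  have : -((5:ℝ) * (k':ℝ)) = -(5*(k':ℝ)) := by ring
  exact mul_le_mul_of_nonneg_right hmono hPpos.le
end

section
/- Let t be a sufficiently large integer and I = [−C√t, C√t] for a sufficiently large constant C. For every polynomial p of degree at most t with E_{x~N(0,1)}[p(x)] = 0, sup_{x∈I} |p(x)| ≤ 2^{O(t)}·‖p‖₁, where ‖p‖₁ = E_{x~N(0,1)}[|p(x)|]. -/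
open MeasureTheory ProbabilityTheory

open Finset Real Nat
open scoped NNReal ENNReal


lemma aux_pow_div_factorial_le_exp {x : ℝ} (hx : 0 ≤ x) (n : ℕ) :
    x ^ n / n ! ≤ Real.exp x := by
  calc x ^ n / n ! ≤ ∑ i ∈ range (n+1), x ^ i / i ! :=
        Finset.single_le_sum (f := fun i => x ^ i / i !) (fun i _ => by positivity)
          (self_mem_range_succ n)
    _ ≤ Real.exp x := Real.sum_le_exp_of_nonneg hx _

lemma aux_exp_le {z : ℝ} (hz : 0 ≤ z) : Real.exp z ≤ (2:ℝ) ^ ((3/2)*z) := by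
  rw [← Real.exp_one_rpow z, Real.rpow_mul (by norm_num : (0:ℝ) ≤ 2)]
  refine Real.rpow_le_rpow (Real.exp_pos 1).le ?_ hz
  have h1 : Real.exp 1 < 2.7182818286 := Real.exp_one_lt_d9
  have h2 : (2.8:ℝ) ≤ (2:ℝ)^((3:ℝ)/2) := by
    have h3 : ((2:ℝ)^((3:ℝ)/2))^(2:ℕ) = 2^(3:ℕ) := by
      rw [← Real.rpow_natCast ((2:ℝ)^((3:ℝ)/2)) 2, ← Real.rpow_mul (by norm_num : (0:ℝ) ≤ 2),
        ← Real.rpow_natCast 2 3]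
      norm_num
    nlinarith [Real.rpow_nonneg (by norm_num : (0:ℝ) ≤ 2) ((3:ℝ)/2)]
  linarith

lemma aux_prod_dist {t i : ℕ} (hi : i ≤ t) :
    ∏ j ∈ (range (t+1)).erase i, |(i:ℝ) - j| = (i ! * (t-i)! : ℕ) := by
  have hset : (range (t+1)).erase i = (range i) ∪ (Finset.Ico (i+1) (t+1)) := by
    ext j
    simp only [Finset.mem_erase, Finset.mem_range, Finset.mem_union, Finset.mem_Ico]
    omega
  have hdisj : Disjoint (range i) (Finset.Ico (i+1) (t+1)) := by
    simp only [Finset.disjoint_left, Finset.mem_range, Finset.mem_Ico]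
    omega
  rw [hset, Finset.prod_union hdisj]
  have h1 : ∏ j ∈ range i, |(i:ℝ) - j| = (i ! : ℕ) := by
    rw [← Nat.descFactorial_self i, Nat.descFactorial_eq_prod_range, Nat.cast_prod]
    refine Finset.prod_congr rfl fun j hj => ?_
    rw [Finset.mem_range] at hj
    rw [Nat.cast_sub hj.le, abs_of_nonneg (by simp [Nat.cast_le.2 hj.le])]
  have h2 : ∏ j ∈ Finset.Ico (i+1) (t+1), |(i:ℝ) - j| = ((t-i)! : ℕ) := by
    have : ∏ j ∈ Finset.Ico (i+1) (t+1), |(i:ℝ) - j| = ∏ j ∈ Finset.Ico (i+1) (t+1), ((j - i : ℕ) : ℝ) := by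
      refine Finset.prod_congr rfl fun j hj => ?_
      rw [Finset.mem_Ico] at hj
      rw [abs_sub_comm, Nat.cast_sub (by omega), abs_of_nonneg]
      simp only [sub_nonneg, Nat.cast_le]
      omega
    rw [this, ← Nat.cast_prod, Finset.prod_Ico_eq_prod_range]
    congr 1
    calc ∏ k ∈ range (t + 1 - (i+1)), (i + 1 + k - i) = ∏ k ∈ range (t - i), (k + 1) := by
          refine Finset.prod_congr (by congr 1; omega) fun k _ => by omega
      _ = (t-i)! := Finset.prod_range_add_one_eq_factorial _
  rw [h1, h2, ← Nat.cast_mul]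

lemma aux_numeric {C : ℝ} (hC : 1 ≤ C) {t : ℕ} (ht : 1 ≤ t) :
    (2*((t:ℝ)+1))^t * 2^t / t ! * ((t:ℝ)+1) * Real.sqrt (2*Real.pi) * Real.exp (C^2*t/2)
      ≤ (2:ℝ) ^ ((C^2+8) * t) := by
  have htR : (1:ℝ) ≤ t := by exact_mod_cast ht
  have h1 : ((t:ℝ)+1)^t / t ! ≤ Real.exp (2*t) := by
    refine (aux_pow_div_factorial_le_exp (by positivity) t).trans ?_
    exact Real.exp_le_exp.2 (by linarith)
  have h2 : ((t:ℝ)+1) ≤ 2^t := by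
    exact_mod_cast (Nat.lt_two_pow_self (n := t))
  have h3 : Real.sqrt (2*Real.pi) ≤ 2^(2:ℕ) := by
    have : Real.sqrt (2*Real.pi) ≤ Real.sqrt 16 := by
      refine Real.sqrt_le_sqrt ?_
      nlinarith [Real.pi_le_four]
    refine this.trans ?_
    rw [show (16:ℝ) = 4^2 by norm_num, Real.sqrt_sq (by norm_num)]
    norm_num
  have h4 : Real.exp (2*(t:ℝ)) ≤ (2:ℝ) ^ ((3/2)*(2*(t:ℝ))) := aux_exp_le (by positivity)
  have h5 : Real.exp (C^2*t/2) ≤ (2:ℝ) ^ ((3/2)*(C^2*t/2)) := aux_exp_le (by positivity)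
  have key : (2*((t:ℝ)+1))^t * 2^t / t ! * ((t:ℝ)+1) * Real.sqrt (2*Real.pi) * Real.exp (C^2*t/2)
      = (2:ℝ)^t * 2^t * (((t:ℝ)+1)^t / t !) * ((t:ℝ)+1) * Real.sqrt (2*Real.pi)
        * Real.exp (C^2*t/2) := by
    rw [mul_pow]; ring
  rw [key]
  have hstep : (2:ℝ)^t * 2^t * (((t:ℝ)+1)^t / t !) * ((t:ℝ)+1) * Real.sqrt (2*Real.pi)
        * Real.exp (C^2*t/2)
      ≤ (2:ℝ)^t * 2^t * ((2:ℝ) ^ ((3/2)*(2*(t:ℝ)))) * ((2:ℝ)^t) * ((2:ℝ)^(2:ℕ))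
        * ((2:ℝ) ^ ((3/2)*(C^2*t/2))) := by
    have e1 : ((t:ℝ)+1)^t / t ! ≤ (2:ℝ) ^ ((3/2)*(2*(t:ℝ))) := h1.trans h4
    gcongr
  refine hstep.trans ?_
  rw [← Real.rpow_natCast 2 t, ← Real.rpow_natCast 2 2,
    ← Real.rpow_add (by norm_num : (0:ℝ) < 2), ← Real.rpow_add (by norm_num : (0:ℝ) < 2),
    ← Real.rpow_add (by norm_num : (0:ℝ) < 2), ← Real.rpow_add (by norm_num : (0:ℝ) < 2),
    ← Real.rpow_add (by norm_num : (0:ℝ) < 2)]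
  refine (Real.rpow_le_rpow_left_iff (by norm_num : (1:ℝ) < 2)).2 ?_
  have hC2 : (0:ℝ) ≤ C^2*t := by positivity
  push_cast
  nlinarith [sq_nonneg C]


lemma aux_integrable_poly_gauss (p : Polynomial ℝ) :
    Integrable (fun x => p.eval x * Real.exp (-(2⁻¹:ℝ) * x ^ 2)) (volume : Measure ℝ) := by
  induction p using Polynomial.induction_on' with
  | add p q hp hq => simpa [add_mul, Pi.add_def] using hp.add hq
  | monomial n a =>
      have h := (integrable_rpow_mul_exp_neg_mul_sq (b := 2⁻¹) (by norm_num)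
        (s := (n:ℝ)) (by exact lt_of_lt_of_le neg_one_lt_zero (Nat.cast_nonneg n))).const_mul a
      simp_rw [Real.rpow_natCast] at h
      refine h.congr (ae_of_all _ fun x => by simp [Polynomial.eval_monomial]; ring)

lemma aux_exists_small (f : ℝ → ℝ) (hf : Continuous f) {a h : ℝ} (hh : 0 < h) :
    ∃ y ∈ Set.Icc a (a + h), f y * h ≤ ∫ x in Set.Icc a (a + h), f x := by
  obtain ⟨y, hy, hmin⟩ := (isCompact_Icc (a := a) (b := a + h)).exists_isMinOn
    (Set.nonempty_Icc.2 (by linarith)) hf.continuousOn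
  refine ⟨y, hy, ?_⟩
  have hmono : ∫ _x in Set.Icc a (a + h), f y ≤ ∫ x in Set.Icc a (a + h), f x :=
    setIntegral_mono_on (integrableOn_const measure_Icc_lt_top.ne)
      (hf.integrableOn_Icc) measurableSet_Icc (fun x hx => hmin hx)
  rw [setIntegral_const, Real.volume_real_Icc, smul_eq_mul,
    max_eq_left (by linarith), show a + h - a = h by ring] at hmono
  linarith [hmono]

lemma aux_gauss_eq (f : ℝ → ℝ) :
    ∫ z, f z ∂(gaussianReal 0 1) = ∫ z, gaussianPDFReal 0 1 z * f z := by
  rw [gaussianReal_of_var_ne_zero 0 one_ne_zero]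
  have hd : (gaussianPDF 0 1) = fun x => (((gaussianPDFReal 0 1 x).toNNReal : ℝ≥0) : ℝ≥0∞) := rfl
  rw [hd, integral_withDensity_eq_integral_smul ((measurable_gaussianPDFReal 0 1).real_toNNReal) f]
  congr 1 with z
  rw [NNReal.smul_def, smul_eq_mul, Real.coe_toNNReal _ (gaussianPDFReal_nonneg 0 1 z)]

lemma aux_pdf_eq (z : ℝ) :
    gaussianPDFReal 0 1 z = (Real.sqrt (2*Real.pi))⁻¹ * Real.exp (-(2⁻¹:ℝ) * z^2) := by
  rw [gaussianPDFReal, NNReal.coe_one, mul_one, sub_zero]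
  congr 1
  ring_nf

/-- For sufficiently large interval constant `C` and sufficiently large `t`, every
mean-zero polynomial of degree `≤ t` satisfies
`sup_{x ∈ [-C√t, C√t]} |p(x)| ≤ 2^{O(t)} ‖p‖₁`. -/
theorem sup_upper_bound_on_interval :
    ∃ C₀ : ℝ, 0 < C₀ ∧ ∀ C : ℝ, C₀ ≤ C → ∃ K T : ℝ, 0 < K ∧
      ∀ t : ℕ, T ≤ t → ∀ p : Polynomial ℝ, p.natDegree ≤ t →
        (∫ x, p.eval x ∂(gaussianReal 0 1)) = 0 →
        ∀ x ∈ Set.Icc (-(C * Real.sqrt t)) (C * Real.sqrt t),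
          |p.eval x| ≤ (2:ℝ) ^ (K * t) * ∫ y, |p.eval y| ∂(gaussianReal 0 1) := by
  refine ⟨1, one_pos, fun C hC => ⟨C^2 + 8, 1, by positivity, ?_⟩⟩
  intro t ht p hdeg _hmean x hx
  have ht1 : 1 ≤ t := by exact_mod_cast ht
  have htR : (1:ℝ) ≤ t := by exact_mod_cast ht
  set A := C * Real.sqrt t with hA
  have hsqrt1 : 1 ≤ Real.sqrt t := by
    rw [show (1:ℝ) = Real.sqrt 1 by simp]
    exact Real.sqrt_le_sqrt htR
  have hA1 : 1 ≤ A := one_le_mul_of_one_le_of_one_le hC hsqrt1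
  have htp : (0:ℝ) < (t:ℝ) + 1 := by positivity
  set h := A / ((t:ℝ)+1) with hh
  have hhpos : 0 < h := by positivity
  have hAh : ((t:ℝ)+1) * h = A := by rw [hh]; field_simp
  have hcont : Continuous fun z => |p.eval z| := (Polynomial.continuous p).abs
  have hnode : ∀ i : ℕ, ∃ z ∈ Set.Icc (-A + 2*i*h) (-A + 2*i*h + h),
      |p.eval z| * h ≤ ∫ w in Set.Icc (-A + 2*i*h) (-A + 2*i*h + h), |p.eval w| :=
    fun i => aux_exists_small _ hcont hhpos
  choose y hyJ hyb using hnode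
  set I := Set.Icc (-A) A with hI
  have hJI : ∀ i : ℕ, i ≤ t → Set.Icc (-A + 2*i*h) (-A + 2*i*h + h) ⊆ I := by
    intro i hit
    apply Set.Icc_subset_Icc
    · have : (0:ℝ) ≤ 2*i*h := by positivity
      linarith
    · have hit' : (i:ℝ) ≤ t := by exact_mod_cast hit
      nlinarith
  have hyI : ∀ i : ℕ, i ≤ t → y i ∈ I := fun i hit => hJI i hit (hyJ i)
  have hsep : ∀ i j : ℕ, i < j → ((j:ℝ) - i) * h ≤ y j - y i := by
    intro i j hij
    have h1 := (hyJ i).2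
    have h2 := (hyJ j).1
    have hij' : (i:ℝ) + 1 ≤ j := by exact_mod_cast hij
    nlinarith
  have habs : ∀ i j : ℕ, i ≠ j → |(i:ℝ) - j| * h ≤ |y i - y j| := by
    intro i j hne
    rcases lt_or_gt_of_ne hne with hlt | hgt
    · have e1 : |(i:ℝ) - j| = (j:ℝ) - i := by
        rw [abs_sub_comm]
        exact abs_of_nonneg (sub_nonneg.2 (by exact_mod_cast hlt.le))
      rw [e1, abs_sub_comm]
      exact (hsep i j hlt).trans (le_abs_self _)
    · have e1 : |(i:ℝ) - j| = (i:ℝ) - j := by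
        exact abs_of_nonneg (sub_nonneg.2 (by exact_mod_cast hgt.le))
      rw [e1]
      exact (hsep j i hgt).trans (le_abs_self _)
  have hinj : Set.InjOn y (range (t+1)) := by
    intro i _ j _ hij
    by_contra hne
    have h1 := habs i j hne
    have h2 : (0:ℝ) < |(i:ℝ) - j| :=
      abs_pos.2 (sub_ne_zero.2 (by exact_mod_cast hne))
    rw [hij, sub_self, abs_zero] at h1
    nlinarith
  have hdeglt : p.degree < ((range (t+1)).card : ℕ) := by
    rw [Finset.card_range]
    refine lt_of_le_of_lt Polynomial.degree_le_natDegree ?_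
    exact_mod_cast Nat.lt_succ_of_le hdeg
  have heq := Lagrange.eq_interpolate (s := range (t+1)) (v := y) hinj hdeglt
  have hx_eq : p.eval x
      = ∑ i ∈ range (t+1), p.eval (y i) * (Lagrange.basis (range (t+1)) y i).eval x := by
    conv_lhs => rw [heq]
    rw [Lagrange.interpolate_apply, Polynomial.eval_finset_sum]
    exact Finset.sum_congr rfl fun i _ => by rw [Polynomial.eval_mul, Polynomial.eval_C]
  have hbasis : ∀ i : ℕ, i ≤ t → |(Lagrange.basis (range (t+1)) y i).eval x|
      ≤ (2*((t:ℝ)+1))^t * ((i ! * (t-i)! : ℕ):ℝ)⁻¹ := by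
    intro i hit
    rw [Lagrange.basis, Polynomial.eval_prod, Finset.abs_prod]
    have hb : ∀ j ∈ (range (t+1)).erase i,
        |(Lagrange.basisDivisor (y i) (y j)).eval x| ≤ (2*((t:ℝ)+1)) * |(i:ℝ) - j|⁻¹ := by
      intro j hj
      obtain ⟨hne, hjm⟩ := Finset.mem_erase.1 hj
      have hjt : j ≤ t := by have := Finset.mem_range.1 hjm; omega
      have hdij : (0:ℝ) < |(i:ℝ) - j| :=
        abs_pos.2 (sub_ne_zero.2 (by exact_mod_cast hne.symm))
      have heval : (Lagrange.basisDivisor (y i) (y j)).eval x = (y i - y j)⁻¹ * (x - y j) := by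
        simp [Lagrange.basisDivisor]
      rw [heval, abs_mul, abs_inv]
      have hnum : |x - y j| ≤ 2*A := by
        have h1 := hx
        have h2 := hyI j hjt
        rw [Set.mem_Icc] at h1 h2
        rw [abs_le]
        constructor <;> [linarith [h1.1, h2.2]; linarith [h1.2, h2.1]]
      have hden : |(i:ℝ) - j| * h ≤ |y i - y j| := habs i j (Ne.symm hne)
      have hinv : |y i - y j|⁻¹ ≤ (|(i:ℝ) - j| * h)⁻¹ :=
        inv_anti₀ (by positivity) hden
      calc |y i - y j|⁻¹ * |x - y j| ≤ (|(i:ℝ) - j| * h)⁻¹ * (2*A) :=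
            mul_le_mul hinv hnum (abs_nonneg _) (by positivity)
        _ = (2*((t:ℝ)+1)) * |(i:ℝ) - j|⁻¹ := by
            rw [← hAh]
            field_simp
    calc ∏ j ∈ (range (t+1)).erase i, |(Lagrange.basisDivisor (y i) (y j)).eval x|
        ≤ ∏ j ∈ (range (t+1)).erase i, (2*((t:ℝ)+1)) * |(i:ℝ) - j|⁻¹ :=
          Finset.prod_le_prod (fun j _ => abs_nonneg _) hb
      _ = (2*((t:ℝ)+1))^t * ((i ! * (t-i)! : ℕ):ℝ)⁻¹ := by
          rw [Finset.prod_mul_distrib, Finset.prod_const,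
            Finset.card_erase_of_mem (Finset.mem_range.2 (by omega)), Finset.card_range,
            Nat.add_sub_cancel, Finset.prod_inv_distrib, aux_prod_dist hit]
  have hIntp : IntegrableOn (fun z => |p.eval z|) I := hcont.integrableOn_Icc
  set S := ∫ z in I, |p.eval z| with hS
  have hS0 : 0 ≤ S := setIntegral_nonneg measurableSet_Icc (fun z _ => abs_nonneg _)
  have hval : ∀ i : ℕ, i ≤ t → |p.eval (y i)| ≤ S / h := by
    intro i hit
    have h1 := hyb i
    have h2 : ∫ w in Set.Icc (-A + 2*i*h) (-A + 2*i*h + h), |p.eval w| ≤ S :=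
      setIntegral_mono_set hIntp (Filter.Eventually.of_forall fun z => abs_nonneg _)
        (HasSubset.Subset.eventuallyLE (hJI i hit))
    rw [le_div_iff₀ hhpos]
    linarith
  have hsum : ∑ i ∈ range (t+1), ((i ! * (t-i)! : ℕ):ℝ)⁻¹ = 2^t / t ! := by
    have hc : ∀ i ∈ range (t+1), ((i ! * (t-i)! : ℕ):ℝ)⁻¹ = (t.choose i : ℝ) / t ! := by
      intro i hi
      have hit : i ≤ t := by have := Finset.mem_range.1 hi; omega
      rw [Nat.cast_choose ℝ hit]
      have h1 : ((i ! : ℕ):ℝ) ≠ 0 := by exact_mod_cast (Nat.factorial_ne_zero i)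
      have h2 : (((t-i)! : ℕ):ℝ) ≠ 0 := by exact_mod_cast (Nat.factorial_ne_zero (t-i))
      have h3 : ((t ! : ℕ):ℝ) ≠ 0 := by exact_mod_cast (Nat.factorial_ne_zero t)
      push_cast
      field_simp
    rw [Finset.sum_congr rfl hc, ← Finset.sum_div, ← Nat.cast_sum, Nat.sum_range_choose]
    push_cast
    ring
  have hmain : |p.eval x| ≤ S / h * ((2*((t:ℝ)+1))^t * (2^t / t !)) := by
    rw [hx_eq]
    calc |∑ i ∈ range (t+1), p.eval (y i) * (Lagrange.basis (range (t+1)) y i).eval x|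
        ≤ ∑ i ∈ range (t+1), |p.eval (y i)| * |(Lagrange.basis (range (t+1)) y i).eval x| := by
          refine (Finset.abs_sum_le_sum_abs _ _).trans ?_
          refine le_of_eq (Finset.sum_congr rfl fun i _ => abs_mul _ _)
      _ ≤ ∑ i ∈ range (t+1), (S/h) * ((2*((t:ℝ)+1))^t * ((i ! * (t-i)! : ℕ):ℝ)⁻¹) := by
          refine Finset.sum_le_sum fun i hi => ?_
          have hit : i ≤ t := by have := Finset.mem_range.1 hi; omega
          exact mul_le_mul (hval i hit) (hbasis i hit) (abs_nonneg _) (by positivity)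
      _ = S / h * ((2*((t:ℝ)+1))^t * (2^t / t !)) := by
          rw [← Finset.mul_sum, ← Finset.mul_sum, hsum]
  set G := ∫ z, |p.eval z| ∂(gaussianReal 0 1) with hG
  have hGeq : G = ∫ z, gaussianPDFReal 0 1 z * |p.eval z| := aux_gauss_eq _
  have hIntG : Integrable (fun z => gaussianPDFReal 0 1 z * |p.eval z|) := by
    have h1 := ((aux_integrable_poly_gauss p).abs).const_mul (Real.sqrt (2*Real.pi))⁻¹
    refine h1.congr (Filter.Eventually.of_forall fun z => ?_)
    simp only [aux_pdf_eq, abs_mul, abs_of_pos (Real.exp_pos _)]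
    ring
  set d := (Real.sqrt (2*Real.pi))⁻¹ * Real.exp (-(C^2*(t:ℝ))/2) with hd
  have hdpos : 0 < d := by positivity
  have hlow : ∀ z ∈ I, d ≤ gaussianPDFReal 0 1 z := by
    intro z hz
    rw [aux_pdf_eq]
    refine mul_le_mul_of_nonneg_left (Real.exp_le_exp.2 ?_) (by positivity)
    rw [Set.mem_Icc] at hz
    have hz2 : z^2 ≤ A^2 := sq_le_sq' (by linarith [hz.1]) (by linarith [hz.2])
    have hA2 : A^2 = C^2 * t := by
      rw [hA, mul_pow, Real.sq_sqrt (by positivity : (0:ℝ) ≤ (t:ℝ))]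
    nlinarith
  have hG0 : 0 ≤ G := by
    rw [hGeq]
    exact integral_nonneg fun z => mul_nonneg (gaussianPDFReal_nonneg 0 1 z) (abs_nonneg _)
  have hSG : d * S ≤ G := by
    rw [hGeq]
    have h1 : d * S = ∫ z in I, d * |p.eval z| := (integral_const_mul d _).symm
    rw [h1]
    refine (setIntegral_mono_on (hIntp.const_mul d) hIntG.integrableOn measurableSet_Icc
      (fun z hz => mul_le_mul_of_nonneg_right (hlow z hz) (abs_nonneg _))).trans ?_
    exact setIntegral_le_integral hIntG (Filter.Eventually.of_forall fun z =>
      mul_nonneg (gaussianPDFReal_nonneg 0 1 z) (abs_nonneg _))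
  have hSle : S ≤ d⁻¹ * G := by
    rw [← mul_le_mul_iff_right₀ hdpos, ← mul_assoc, mul_inv_cancel₀ hdpos.ne', one_mul]
    exact hSG
  have hfinal : S / h * ((2*((t:ℝ)+1))^t * (2^t / t !)) ≤ (2:ℝ)^((C^2+8)*(t:ℝ)) * G := by
    have hE0 : (0:ℝ) ≤ (2*((t:ℝ)+1))^t * (2^t / t !) := by positivity
    have step1 : S / h * ((2*((t:ℝ)+1))^t * (2^t / t !))
        ≤ (d⁻¹ * G) / h * ((2*((t:ℝ)+1))^t * (2^t / t !)) := by
      gcongr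
    refine step1.trans ?_
    have e2 : (d⁻¹ * G) / h * ((2*((t:ℝ)+1))^t * (2^t / t !))
        = ((2*((t:ℝ)+1))^t * (2^t / t !) * d⁻¹ / h) * G := by ring
    rw [e2]
    refine mul_le_mul_of_nonneg_right ?_ hG0
    have hdinv : d⁻¹ = Real.sqrt (2*Real.pi) * Real.exp (C^2*(t:ℝ)/2) := by
      rw [hd, mul_inv, inv_inv, ← Real.exp_neg]
      congr 1
      ring_nf
    have hinvh : 1/h ≤ (t:ℝ)+1 := by
      rw [hh, one_div, inv_div]
      calc ((t:ℝ)+1)/A ≤ ((t:ℝ)+1)/1 := by gcongr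
        _ = (t:ℝ)+1 := by ring
    calc (2*((t:ℝ)+1))^t * (2^t / t !) * d⁻¹ / h
        = ((2*((t:ℝ)+1))^t * (2^t / t !) * d⁻¹) * (1/h) := by ring
      _ ≤ ((2*((t:ℝ)+1))^t * (2^t / t !) * d⁻¹) * ((t:ℝ)+1) := by
          refine mul_le_mul_of_nonneg_left hinvh ?_
          rw [hdinv]
          positivity
      _ = (2*((t:ℝ)+1))^t * 2^t / t ! * ((t:ℝ)+1) * Real.sqrt (2*Real.pi)
            * Real.exp (C^2*(t:ℝ)/2) := by rw [hdinv]; ring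
      _ ≤ (2:ℝ) ^ ((C^2+8) * (t:ℝ)) := aux_numeric hC ht1
  exact hmain.trans hfinal
end

section
/- Let A be a probability distribution on ℝ and let m', γ > 0. Suppose every monomial x^i with 1 ≤ i ≤ r satisfies |E_{x~A}[x^i] − E_{x~N(0,1)}[x^i]| ≤ 2^{-Cr}γ for a sufficiently large constant C. Then every polynomial g of degree at most r with E_{x~N(0,1)}[g(x)²] = 1 satisfies |E_{x~A}[g(x)] − E_{x~N(0,1)}[g(x)]| ≤ γ. -/
open MeasureTheory ProbabilityTheory Polynomial Real Filter Finset
open scoped Nat Topology ENNReal NNReal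

namespace MomentMatch

noncomputable def w (x : ℝ) : ℝ := rexp (-x ^ 2 / 2)

noncomputable def H (n : ℕ) : Polynomial ℝ := (Polynomial.hermite n).map (Int.castRingHom ℝ)

lemma H_zero : H 0 = 1 := by simp [H, Polynomial.hermite_zero]

lemma H_succ (n : ℕ) : H (n + 1) = X * H n - derivative (H n) := by
  unfold H
  rw [Polynomial.hermite_succ, Polynomial.map_sub, Polynomial.map_mul, Polynomial.map_X,
    derivative_map]

lemma natDegree_H (n : ℕ) : (H n).natDegree = n := by
  unfold H
  rw [(Polynomial.hermite_monic n).natDegree_map]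
  exact Polynomial.natDegree_hermite

lemma coeff_H (n k : ℕ) : (H n).coeff k = ((Polynomial.hermite n).coeff k : ℝ) := by
  simp [H, Polynomial.coeff_map]

lemma df_le_succ : ∀ m : ℕ, m ‼ ≤ (m + 1)‼
  | 0 => le_refl 1
  | 1 => by norm_num [Nat.doubleFactorial]
  | (m + 2) => by
    rw [Nat.doubleFactorial_add_two, show m + 2 + 1 = (m + 1) + 2 from rfl,
      Nat.doubleFactorial_add_two]
    exact Nat.mul_le_mul (by omega) (df_le_succ m)

lemma sq_df_le_factorial : ∀ j : ℕ, (j - 1)‼ * (j - 1)‼ ≤ j !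
  | 0 => le_refl 1
  | (j + 1) => by
    simp only [Nat.add_sub_cancel]
    calc j ‼ * j ‼ ≤ (j + 1)‼ * j ‼ := Nat.mul_le_mul_right _ (df_le_succ j)
    _ = (j + 1)! := (Nat.factorial_eq_mul_doubleFactorial j).symm

lemma choose_le_two_pow (n k : ℕ) : n.choose k ≤ 2 ^ n := by
  rcases le_or_gt k n with h | h
  · calc n.choose k ≤ ∑ i ∈ range (n + 1), n.choose i :=
        Finset.single_le_sum (fun i _ => Nat.zero_le _) (by simp [Nat.lt_succ_of_le h])
      _ = 2 ^ n := Nat.sum_range_choose n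
  · rw [Nat.choose_eq_zero_of_lt h]; exact Nat.zero_le _

lemma abs_coeff_H_le (n k : ℕ) : |(H n).coeff k| ≤ 2 ^ n * Real.sqrt (n !) := by
  have hsqrt1 : (1 : ℝ) ≤ Real.sqrt (n !) := by
    rw [show (1:ℝ) = Real.sqrt 1 by simp]
    exact Real.sqrt_le_sqrt (by exact_mod_cast Nat.one_le_iff_ne_zero.mpr n.factorial_ne_zero)
  rw [coeff_H, Polynomial.coeff_hermite]
  split_ifs with h
  · push_cast
    rw [abs_mul, abs_mul, abs_pow, abs_neg, abs_one, one_pow, one_mul, Nat.abs_cast, Nat.abs_cast]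
    have h1 : ((n - k - 1)‼ : ℝ) ≤ Real.sqrt (n !) := by
      rw [show ((n - k - 1)‼ : ℝ) = Real.sqrt ((((n - k - 1)‼ : ℕ) : ℝ) ^ 2) by
        rw [Real.sqrt_sq (by positivity)]]
      apply Real.sqrt_le_sqrt
      have : (n - k - 1)‼ * (n - k - 1)‼ ≤ n ! := by
        calc (n - k - 1)‼ * (n - k - 1)‼ = ((n - k) - 1)‼ * ((n - k) - 1)‼ := rfl
        _ ≤ (n - k)! := sq_df_le_factorial _
        _ ≤ n ! := Nat.factorial_le (Nat.sub_le n k)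
      have e1 : (((n - k - 1)‼ : ℕ) : ℝ) ^ 2 = (((n - k - 1)‼ * (n - k - 1)‼ : ℕ) : ℝ) := by
        push_cast; ring
      rw [e1]
      exact_mod_cast this
    have h2 : ((n.choose k : ℕ) : ℝ) ≤ 2 ^ n := by exact_mod_cast choose_le_two_pow n k
    rw [mul_comm ((2:ℝ) ^ n)]
    exact mul_le_mul h1 h2 (by positivity) (by positivity)
  · rw [Int.cast_zero, abs_zero]
    positivity


lemma integrable_xn_w (n : ℕ) : Integrable (fun x : ℝ => x ^ n * w x) := by
  have h := integrable_rpow_mul_exp_neg_mul_sq (b := 1/2) (by norm_num) (s := (n : ℝ))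
    (by exact lt_of_lt_of_le neg_one_lt_zero (Nat.cast_nonneg n))
  refine h.congr (Filter.Eventually.of_forall fun x => ?_)
  show x ^ (n : ℝ) * rexp (-(1/2) * x ^ 2) = x ^ n * w x
  rw [Real.rpow_natCast]
  unfold w
  congr 1
  ring

lemma integrable_pw (p : Polynomial ℝ) : Integrable (fun x : ℝ => p.eval x * w x) := by
  have h : Integrable (fun x : ℝ =>
      ∑ i ∈ range (p.natDegree + 1), p.coeff i * (x ^ i * w x)) :=
    integrable_finset_sum _ fun i _ => (integrable_xn_w i).const_mul _
  refine h.congr (Filter.Eventually.of_forall fun x => ?_)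
  show (∑ i ∈ range (p.natDegree + 1), p.coeff i * (x ^ i * w x)) = p.eval x * w x
  rw [Polynomial.eval_eq_sum_range, Finset.sum_mul]
  exact Finset.sum_congr rfl fun i _ => by ring

lemma tendsto_exp_half : Tendsto (fun x : ℝ => rexp (-(1/2) * x)) atTop (𝓝 0) := by
  apply Real.tendsto_exp_atBot.comp
  have h : Tendsto (fun x : ℝ => (1/2 : ℝ) * x) atTop atTop :=
    Tendsto.const_mul_atTop (by norm_num) tendsto_id
  have := tendsto_neg_atTop_atBot.comp h
  refine this.congr fun x => ?_
  simp [Function.comp]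

lemma tendsto_xn_w_top (n : ℕ) : Tendsto (fun x : ℝ => x ^ n * w x) atTop (𝓝 0) := by
  have h := ((rpow_mul_exp_neg_mul_sq_isLittleO_exp_neg (b := 1/2) (by norm_num)
    (n : ℝ)).isBigO).trans_tendsto tendsto_exp_half
  refine h.congr fun x => ?_
  rw [Real.rpow_natCast]
  unfold w
  congr 1
  ring

lemma tendsto_pw_top (p : Polynomial ℝ) : Tendsto (fun x : ℝ => p.eval x * w x) atTop (𝓝 0) := by
  have h : Tendsto (fun x : ℝ =>
      ∑ i ∈ range (p.natDegree + 1), p.coeff i * (x ^ i * w x)) atTop (𝓝 0) := by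
    have := tendsto_finset_sum (range (p.natDegree + 1))
      (fun i (_ : i ∈ range (p.natDegree + 1)) => (tendsto_xn_w_top i).const_mul (p.coeff i))
    simpa using this
  refine h.congr fun x => ?_
  rw [Polynomial.eval_eq_sum_range, Finset.sum_mul]
  exact Finset.sum_congr rfl fun i _ => by ring

lemma tendsto_pw_bot (p : Polynomial ℝ) : Tendsto (fun x : ℝ => p.eval x * w x) atBot (𝓝 0) := by
  have h := (tendsto_pw_top (p.comp (-X))).comp tendsto_neg_atBot_atTop
  refine h.congr fun x => ?_
  simp only [Function.comp_apply, Polynomial.eval_comp, Polynomial.eval_neg, Polynomial.eval_X,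
    neg_neg]
  congr 1
  unfold w
  rw [neg_sq]

lemma hasDerivAt_w (x : ℝ) : HasDerivAt w (-x * w x) x := by
  have h : HasDerivAt (fun y : ℝ => -y ^ 2 / 2) (-x) x := by
    have := ((hasDerivAt_pow 2 x).neg.div_const 2)
    exact this.congr_deriv (by norm_num; ring)
  have := h.exp
  unfold w
  simpa [mul_comm] using this

lemma hasDerivAt_F (p : Polynomial ℝ) (x : ℝ) :
    HasDerivAt (fun y => p.eval y * w y) ((derivative p - X * p).eval x * w x) x := by
  have h := (p.hasDerivAt x).mul (hasDerivAt_w x)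
  refine h.congr_deriv ?_
  simp only [Polynomial.eval_sub, Polynomial.eval_mul, Polynomial.eval_X]
  ring

lemma integral_w_deriv_zero (p : Polynomial ℝ) :
    ∫ x : ℝ, (derivative p - X * p).eval x * w x = 0 := by
  have hint : Integrable (fun x : ℝ => (derivative p - X * p).eval x * w x) := integrable_pw _
  have h1 : ∫ x in Set.Iic (0:ℝ), (derivative p - X * p).eval x * w x
      = p.eval 0 * w 0 - 0 :=
    integral_Iic_of_hasDerivAt_of_tendsto' (fun x _ => hasDerivAt_F p x)
      hint.integrableOn (tendsto_pw_bot p)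
  have h2 : ∫ x in Set.Ioi (0:ℝ), (derivative p - X * p).eval x * w x
      = 0 - p.eval 0 * w 0 :=
    integral_Ioi_of_hasDerivAt_of_tendsto' (fun x _ => hasDerivAt_F p x)
      hint.integrableOn (tendsto_pw_top p)
  rw [← intervalIntegral.integral_Iic_add_Ioi (b := (0:ℝ)) hint.integrableOn hint.integrableOn,
    h1, h2]
  ring

lemma stein_w (p : Polynomial ℝ) :
    ∫ x : ℝ, (X * p).eval x * w x = ∫ x : ℝ, (derivative p).eval x * w x := by
  have h : (∫ x : ℝ, (derivative p).eval x * w x) - ∫ x : ℝ, (X * p).eval x * w x = 0 := by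
    rw [← integral_sub (integrable_pw _) (integrable_pw _), ← integral_w_deriv_zero p]
    congr 1
    funext x
    simp only [Polynomial.eval_sub]
    ring
  linarith


lemma pdf_eq (x : ℝ) : gaussianPDFReal 0 1 x = (Real.sqrt (2 * π))⁻¹ * w x := by
  unfold gaussianPDFReal w
  norm_num

lemma integral_gaussian_eq (f : ℝ → ℝ) :
    ∫ x, f x ∂(gaussianReal 0 1) = ∫ x : ℝ, gaussianPDFReal 0 1 x * f x := by
  rw [gaussianReal_of_var_ne_zero _ one_ne_zero]
  have hmeas : Measurable (fun x : ℝ => (gaussianPDFReal 0 1 x).toNNReal) :=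
    (measurable_gaussianPDFReal 0 1).real_toNNReal
  have : (gaussianPDF 0 1) = fun x => ((gaussianPDFReal 0 1 x).toNNReal : ℝ≥0∞) := by
    funext x; rfl
  rw [this, integral_withDensity_eq_integral_smul hmeas]
  congr 1
  funext x
  rw [NNReal.smul_def, smul_eq_mul, Real.coe_toNNReal _ (gaussianPDFReal_nonneg 0 1 x)]

noncomputable def IG (p : Polynomial ℝ) : ℝ := ∫ x, p.eval x ∂(gaussianReal 0 1)

lemma IG_eq (p : Polynomial ℝ) :
    IG p = (Real.sqrt (2 * π))⁻¹ * ∫ x : ℝ, p.eval x * w x := by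
  unfold IG
  rw [integral_gaussian_eq]
  rw [← integral_const_mul]
  congr 1
  funext x
  rw [pdf_eq]
  ring

lemma integrable_IG (p : Polynomial ℝ) :
    Integrable (fun x => p.eval x) (gaussianReal 0 1) := by
  rw [gaussianReal_of_var_ne_zero _ one_ne_zero]
  have hmeas : Measurable (fun x : ℝ => (gaussianPDFReal 0 1 x).toNNReal) :=
    (measurable_gaussianPDFReal 0 1).real_toNNReal
  have h : (gaussianPDF 0 1) = fun x => ((gaussianPDFReal 0 1 x).toNNReal : ℝ≥0∞) := by
    funext x; rfl
  rw [h, integrable_withDensity_iff_integrable_smul hmeas]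
  have : Integrable (fun x : ℝ => (Real.sqrt (2 * π))⁻¹ * (p.eval x * w x)) :=
    (integrable_pw p).const_mul _
  refine this.congr (Filter.Eventually.of_forall fun x => ?_)
  show (√(2 * π))⁻¹ * (p.eval x * w x) = (gaussianPDFReal 0 1 x).toNNReal • p.eval x
  rw [NNReal.smul_def, smul_eq_mul, Real.coe_toNNReal _ (gaussianPDFReal_nonneg 0 1 x), pdf_eq]
  ring

lemma IG_add (p q : Polynomial ℝ) : IG (p + q) = IG p + IG q := by
  unfold IG
  rw [← integral_add (integrable_IG p) (integrable_IG q)]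
  congr 1
  funext x
  simp

lemma IG_sub (p q : Polynomial ℝ) : IG (p - q) = IG p - IG q := by
  unfold IG
  rw [← integral_sub (integrable_IG p) (integrable_IG q)]
  congr 1
  funext x
  simp

lemma IG_smul (a : ℝ) (p : Polynomial ℝ) : IG (C a * p) = a * IG p := by
  unfold IG
  rw [← integral_const_mul]
  congr 1
  funext x
  simp

lemma IG_C (a : ℝ) : IG (C a) = a := by
  unfold IG
  simp [integral_const]

lemma IG_sum {ι : Type*} (s : Finset ι) (f : ι → Polynomial ℝ) :
    IG (∑ i ∈ s, f i) = ∑ i ∈ s, IG (f i) := by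
  unfold IG
  rw [← integral_finset_sum s (fun i _ => integrable_IG (f i))]
  congr 1
  funext x
  simp [Polynomial.eval_finset_sum]

lemma IG_stein (p : Polynomial ℝ) : IG (X * p) = IG (derivative p) := by
  rw [IG_eq, IG_eq, stein_w]

lemma IG_mul_H (n : ℕ) : ∀ p : Polynomial ℝ, IG (p * H n) = IG (derivative^[n] p) := by
  induction n with
  | zero => intro p; rw [H_zero, mul_one]; rfl
  | succ n ih =>
    intro p
    have key : p * H (n + 1) = X * (p * H n) - (derivative p * H n + p * derivative (H n)) +
        derivative p * H n := by
      rw [H_succ]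
      ring
    rw [key, IG_add, IG_sub, IG_stein, derivative_mul, IG_add, ih (derivative p)]
    rw [Function.iterate_succ_apply]
    ring


lemma IG_def (p : Polynomial ℝ) : IG p = ∫ x, p.eval x ∂(gaussianReal 0 1) := rfl

lemma IG_zero : IG 0 = 0 := by
  have := IG_C 0
  simpa using this

lemma IG_H_self (n : ℕ) : IG (H n * H n) = n ! := by
  rw [IG_mul_H]
  have hdeg : (derivative^[n] (H n)).natDegree ≤ 0 := by
    have h := Polynomial.natDegree_iterate_derivative (H n) n
    rw [natDegree_H] at h
    simpa using h
  have heq : derivative^[n] (H n) = C ((derivative^[n] (H n)).coeff 0) :=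
    Polynomial.eq_C_of_natDegree_le_zero hdeg
  rw [heq, IG_C, Polynomial.coeff_iterate_derivative]
  rw [zero_add, Nat.descFactorial_self]
  rw [coeff_H, Polynomial.coeff_hermite_self]
  simp

lemma IG_H_lt {m n : ℕ} (h : m < n) : IG (H m * H n) = 0 := by
  rw [IG_mul_H, Polynomial.iterate_derivative_eq_zero (by rw [natDegree_H]; exact h), IG_zero]

lemma IG_H_ne {m n : ℕ} (h : m ≠ n) : IG (H m * H n) = 0 := by
  rcases lt_or_gt_of_ne h with h' | h'
  · exact IG_H_lt h'
  · rw [mul_comm]; exact IG_H_lt h'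

lemma exists_decomp : ∀ (N : ℕ) (g : Polynomial ℝ), g.natDegree ≤ N →
    ∃ d : ℕ → ℝ, g = ∑ i ∈ range (N + 1), C (d i) * H i := by
  intro N
  induction N with
  | zero =>
    intro g hg
    refine ⟨fun _ => g.coeff 0, ?_⟩
    rw [Polynomial.eq_C_of_natDegree_le_zero hg]
    simp [H, Polynomial.hermite_zero]
  | succ N ih =>
    intro g hg
    set a := g.coeff (N + 1) with ha
    have hdeg : (g - C a * H (N + 1)).natDegree ≤ N := by
      rw [Polynomial.natDegree_le_iff_coeff_eq_zero]
      intro j hj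
      rw [Polynomial.coeff_sub, Polynomial.coeff_C_mul]
      rcases eq_or_lt_of_le (Nat.succ_le_of_lt hj) with h | h
      · rw [← h, coeff_H, Polynomial.coeff_hermite_self]
        simp [ha]
      · rw [coeff_H, Polynomial.coeff_hermite_of_lt h]
        rw [Polynomial.coeff_eq_zero_of_natDegree_lt (lt_of_le_of_lt hg h)]
        simp
    obtain ⟨d, hd⟩ := ih _ hdeg
    refine ⟨Function.update d (N + 1) a, ?_⟩
    rw [Finset.sum_range_succ, Function.update_self]
    rw [Finset.sum_congr rfl (fun i hi => by
      rw [Function.update_of_ne (by simp only [Finset.mem_range] at hi; omega)])]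
    rw [← hd]
    ring

lemma IG_sq_nonneg (p : Polynomial ℝ) : 0 ≤ IG (p * p) := by
  rw [IG_def]
  apply integral_nonneg
  intro x
  show (0:ℝ) ≤ (p * p).eval x
  rw [Polynomial.eval_mul]
  exact mul_self_nonneg _

lemma abs_IG_mul_H_le (g : Polynomial ℝ) (i : ℕ) (hg : IG (g * g) = 1) :
    |IG (g * H i)| ≤ Real.sqrt (i !) := by
  set T := IG (g * H i) with hT
  have hfact : (0:ℝ) < (i ! : ℝ) := by exact_mod_cast i.factorial_pos
  have key : ∀ s : ℝ, 0 ≤ 1 - 2 * s * T + s ^ 2 * (i ! : ℝ) := by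
    intro s
    have h0 := IG_sq_nonneg (g - C s * H i)
    have expand : (g - C s * H i) * (g - C s * H i)
        = g * g - C s * (g * H i) - C s * (H i * g) + C s * (C s * (H i * H i)) := by ring
    rw [expand, IG_add, IG_sub, IG_sub, IG_smul, IG_smul, IG_smul, IG_smul, hg, IG_H_self] at h0
    have hTg : IG (H i * g) = T := by rw [hT, mul_comm]
    rw [hTg, ← hT] at h0
    nlinarith [h0]
  have hT2 : T ^ 2 ≤ (i ! : ℝ) := by
    have k := key (T / (i ! : ℝ))
    have e : 1 - 2 * (T / (i ! : ℝ)) * T + (T / (i ! : ℝ)) ^ 2 * (i ! : ℝ)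
        = 1 - T ^ 2 / (i ! : ℝ) := by
      field_simp
      ring
    rw [e] at k
    have h2 : T ^ 2 / (i ! : ℝ) ≤ 1 := by linarith
    calc T ^ 2 = T ^ 2 / (i ! : ℝ) * (i ! : ℝ) := by field_simp
      _ ≤ 1 * (i ! : ℝ) := mul_le_mul_of_nonneg_right h2 hfact.le
      _ = (i ! : ℝ) := one_mul _
  exact Real.abs_le_sqrt hT2

lemma coeff_bound (r : ℕ) (g : Polynomial ℝ) (hdeg : g.natDegree ≤ r) (hg : IG (g * g) = 1)
    (j : ℕ) : |g.coeff j| ≤ 2 ^ (r + 1) := by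
  obtain ⟨d, hd⟩ := exists_decomp r g hdeg
  have hIGH : ∀ i ∈ range (r + 1), IG (g * H i) = d i * (i ! : ℝ) := by
    intro i hi
    conv_lhs => rw [hd]
    have e1 : (∑ k ∈ range (r + 1), C (d k) * H k) * H i
        = ∑ k ∈ range (r + 1), C (d k) * (H k * H i) := by
      rw [Finset.sum_mul]
      exact Finset.sum_congr rfl fun k _ => by ring
    rw [e1, IG_sum]
    rw [Finset.sum_eq_single_of_mem i hi (fun k _ hk => by rw [IG_smul, IG_H_ne hk, mul_zero])]
    rw [IG_smul, IG_H_self]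
  have hdle : ∀ i ∈ range (r + 1), |d i| ≤ Real.sqrt (i !) / (i ! : ℝ) := by
    intro i hi
    have hfact : (0:ℝ) < (i ! : ℝ) := by exact_mod_cast i.factorial_pos
    have h1 := abs_IG_mul_H_le g i hg
    rw [hIGH i hi, abs_mul, Nat.abs_cast] at h1
    rw [le_div_iff₀ hfact]
    exact h1
  have hcoeff : g.coeff j = ∑ i ∈ range (r + 1), d i * (H i).coeff j := by
    conv_lhs => rw [hd]
    rw [Polynomial.finset_sum_coeff]
    exact Finset.sum_congr rfl fun i _ => by rw [Polynomial.coeff_C_mul]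
  rw [hcoeff]
  calc |∑ i ∈ range (r + 1), d i * (H i).coeff j|
      ≤ ∑ i ∈ range (r + 1), |d i * (H i).coeff j| := Finset.abs_sum_le_sum_abs _ _
    _ ≤ ∑ i ∈ range (r + 1), (2:ℝ) ^ i := by
        refine Finset.sum_le_sum fun i hi => ?_
        rw [abs_mul]
        have hfact : (0:ℝ) < (i ! : ℝ) := by exact_mod_cast i.factorial_pos
        have hsq : Real.sqrt (i !) * Real.sqrt (i !) = (i ! : ℝ) :=
          Real.mul_self_sqrt hfact.le
        calc |d i| * |(H i).coeff j|
            ≤ (Real.sqrt (i !) / (i ! : ℝ)) * (2 ^ i * Real.sqrt (i !)) :=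
              mul_le_mul (hdle i hi) (abs_coeff_H_le i j) (abs_nonneg _) (by positivity)
          _ = (2:ℝ) ^ i * ((Real.sqrt (i !) * Real.sqrt (i !)) / (i ! : ℝ)) := by ring
          _ = (2:ℝ) ^ i := by rw [hsq, div_self hfact.ne', mul_one]
    _ = 2 ^ (r + 1) - 1 := by
        rw [geom_sum_eq (by norm_num : (2:ℝ) ≠ 1)]
        norm_num
    _ ≤ 2 ^ (r + 1) := by linarith



end MomentMatch

open MomentMatch in
/-- If all monomials up to degree `r` have expectations under `A` within `2^{-Cr}γ` of the
Gaussian ones (for sufficiently large `C`), then every unit-norm degree-`≤ r` polynomial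
has expectation gap at most `γ`. -/
theorem monomial_matching_implies_polynomial_matching :
    ∃ C : ℝ, 0 < C ∧ ∀ (A : Measure ℝ), IsProbabilityMeasure A →
      ∀ (r : ℕ) (γ : ℝ), 0 < γ →
      (∀ i : ℕ, i ≤ r → Integrable (fun x => x ^ i) A) →
      (∀ i : ℕ, 1 ≤ i → i ≤ r →
        |(∫ x, x ^ i ∂A) - ∫ x, x ^ i ∂(gaussianReal 0 1)| ≤ 2 ^ (-(C * r)) * γ) →
      ∀ g : Polynomial ℝ, g.natDegree ≤ r →
        (∫ x, (g.eval x) ^ 2 ∂(gaussianReal 0 1)) = 1 →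
        |(∫ x, g.eval x ∂A) - ∫ x, g.eval x ∂(gaussianReal 0 1)| ≤ γ := by
  refine ⟨4, by norm_num, ?_⟩
  intro A hA r γ hγ hInt hMom g hdeg hnorm
  have hIGgg : IG (g * g) = 1 := by
    rw [IG_def, ← hnorm]
    congr 1
    funext x
    rw [Polynomial.eval_mul]
    ring
  have hcb : ∀ j, |g.coeff j| ≤ 2 ^ (r + 1) := coeff_bound r g hdeg hIGgg
  have hGint : ∀ i : ℕ, Integrable (fun x : ℝ => x ^ i) (gaussianReal 0 1) := fun i =>
    (integrable_IG (X ^ i)).congr (Filter.Eventually.of_forall fun x => by simp)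
  have hgfun : (fun x : ℝ => g.eval x) = fun x : ℝ => ∑ i ∈ range (r + 1), g.coeff i * x ^ i :=
    funext fun x => Polynomial.eval_eq_sum_range' (Nat.lt_succ_of_le hdeg) x
  have hAeq : ∫ x, g.eval x ∂A = ∑ i ∈ range (r + 1), g.coeff i * ∫ x, x ^ i ∂A := by
    rw [hgfun, integral_finset_sum _ (fun i hi =>
      (hInt i (Nat.lt_succ_iff.mp (Finset.mem_range.mp hi))).const_mul _)]
    exact Finset.sum_congr rfl fun i _ => integral_const_mul _ _
  have hGeq : ∫ x, g.eval x ∂(gaussianReal 0 1)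
      = ∑ i ∈ range (r + 1), g.coeff i * ∫ x, x ^ i ∂(gaussianReal 0 1) := by
    rw [hgfun, integral_finset_sum _ (fun i _ => (hGint i).const_mul _)]
    exact Finset.sum_congr rfl fun i _ => integral_const_mul _ _
  set MA : ℕ → ℝ := fun i => ∫ x, x ^ i ∂A with hMA
  set MG : ℕ → ℝ := fun i => ∫ x, x ^ i ∂(gaussianReal 0 1) with hMG
  have hdiff : (∫ x, g.eval x ∂A) - ∫ x, g.eval x ∂(gaussianReal 0 1)
      = ∑ i ∈ range r, g.coeff (i + 1) * (MA (i + 1) - MG (i + 1)) := by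
    rw [hAeq, hGeq, ← Finset.sum_sub_distrib]
    have : ∀ i ∈ range (r + 1), g.coeff i * MA i - g.coeff i * MG i
        = g.coeff i * (MA i - MG i) := fun i _ => by ring
    rw [Finset.sum_congr rfl this, Finset.sum_range_succ']
    have h0 : MA 0 = 1 := by simp [hMA]
    have h0' : MG 0 = 1 := by simp [hMG]
    rw [h0, h0']
    simp
  rw [hdiff]
  have hterm : ∀ i ∈ range r, |g.coeff (i + 1) * (MA (i + 1) - MG (i + 1))|
      ≤ 2 ^ (r + 1) * (2 ^ (-((4:ℝ) * r)) * γ) := by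
    intro i hi
    rw [abs_mul]
    have h1 := hcb (i + 1)
    have h2 := hMom (i + 1) (Nat.le_add_left 1 i) (Nat.succ_le_of_lt (Finset.mem_range.mp hi))
    exact mul_le_mul h1 h2 (abs_nonneg _) (by positivity)
  calc |∑ i ∈ range r, g.coeff (i + 1) * (MA (i + 1) - MG (i + 1))|
      ≤ ∑ i ∈ range r, |g.coeff (i + 1) * (MA (i + 1) - MG (i + 1))| :=
        Finset.abs_sum_le_sum_abs _ _
    _ ≤ ∑ _i ∈ range r, 2 ^ (r + 1) * (2 ^ (-((4:ℝ) * r)) * γ) :=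
        Finset.sum_le_sum hterm
    _ = r * (2 ^ (r + 1) * (2 ^ (-((4:ℝ) * r)) * γ)) := by
        rw [Finset.sum_const, Finset.card_range, nsmul_eq_mul]
    _ ≤ γ := by
        have hrpow : (2:ℝ) ^ (-((4:ℝ) * r)) = ((2:ℝ) ^ (4 * r : ℕ))⁻¹ := by
          rw [show -((4:ℝ) * r) = -(((4 * r : ℕ) : ℝ)) by push_cast; ring,
            Real.rpow_neg (by norm_num), Real.rpow_natCast]
        rw [hrpow]
        have hnat : r * 2 ^ (r + 1) ≤ 2 ^ (4 * r) := by
          rcases Nat.eq_zero_or_pos r with h | h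
          · subst h; simp
          · calc r * 2 ^ (r + 1) ≤ 2 ^ r * 2 ^ (r + 1) :=
                Nat.mul_le_mul_right _ (Nat.lt_two_pow_self (n := r)).le
              _ = 2 ^ (2 * r + 1) := by rw [← pow_add]; ring_nf
              _ ≤ 2 ^ (4 * r) := Nat.pow_le_pow_right (by norm_num) (by omega)
        have hreal : (r : ℝ) * 2 ^ (r + 1) ≤ 2 ^ (4 * r) := by exact_mod_cast hnat
        have hpos : (0:ℝ) < 2 ^ (4 * r) := by positivity
        rw [show (r:ℝ) * (2 ^ (r + 1) * (((2:ℝ) ^ (4 * r))⁻¹ * γ))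
            = ((r:ℝ) * 2 ^ (r + 1)) * (((2:ℝ) ^ (4 * r))⁻¹ * γ) by ring]
        calc ((r:ℝ) * 2 ^ (r + 1)) * (((2:ℝ) ^ (4 * r))⁻¹ * γ)
            ≤ (2:ℝ) ^ (4 * r) * (((2:ℝ) ^ (4 * r))⁻¹ * γ) :=
              mul_le_mul_of_nonneg_right hreal (by positivity)
          _ = γ := by field_simp
end

section
/- Let B be a one-dimensional distribution and let A be such that B = U_ρ A, the Ornstein–Uhlenbeck noising of A with parameter ρ = √δ, δ ∈ (0,1]. If every degree ≤ m' polynomial p with E_{N(0,1)}[p²] = 1 satisfies |E_{x~B}[p(x)] − E_{x~N(0,1)}[p(x)]| ≤ λ, then every degree ≤ m' polynomial p with E_{N(0,1)}[p²] = 1 satisfies |E_{x~A}[p(x)] − E_{x~N(0,1)}[p(x)]| ≤ √(m')·λ·δ^{-m'/2}. -/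
open MeasureTheory ProbabilityTheory

section OUAux

open Polynomial Filter
open scoped NNReal ENNReal

-- derivative of Hermite
theorem hermite_deriv_pair (n : ℕ) :
    derivative (hermite (n+1)) = (n+1 : ℤ) • hermite n ∧
    derivative (hermite (n+2)) = (n+2 : ℤ) • hermite (n+1) := by
  induction n with
  | zero =>
    constructor
    · simp [hermite_one, hermite_zero]
    · rw [hermite_succ, hermite_one]
      simp only [smul_eq_C_mul]
      simp [hermite_one, hermite_zero]
      ring
  | succ n ih =>
    obtain ⟨h1, h2⟩ := ih
    refine ⟨h2, ?_⟩
    rw [hermite_succ (n+2), derivative_sub, derivative_mul, derivative_X, h2]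
    rw [derivative_smul, h1]
    have : hermite (n+2) = X * hermite (n+1) - derivative (hermite (n+1)) := hermite_succ (n+1)
    rw [h1] at this
    rw [this]
    simp only [smul_eq_C_mul]
    push_cast [C_add, C_1, map_ofNat]
    ring

theorem hermite_deriv (n : ℕ) :
    derivative (hermite (n+1)) = (n+1 : ℤ) • hermite n := (hermite_deriv_pair n).1

noncomputable def Hr (n : ℕ) : Polynomial ℝ := (hermite n).map (Int.castRingHom ℝ)

theorem Hr_zero : Hr 0 = 1 := by simp [Hr, hermite_zero]
theorem Hr_one : Hr 1 = X := by simp [Hr, hermite_one]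

theorem Hr_succ (n : ℕ) : Hr (n+1) = X * Hr n - derivative (Hr n) := by
  unfold Hr
  rw [hermite_succ, Polynomial.map_sub, Polynomial.map_mul, map_X, derivative_map]

theorem Hr_deriv (n : ℕ) : derivative (Hr (n+1)) = ((n:ℝ)+1) • Hr n := by
  unfold Hr
  rw [derivative_map, hermite_deriv, Polynomial.map_smul]
  norm_num

theorem Hr_natDegree (n : ℕ) : (Hr n).natDegree = n := by
  unfold Hr
  rw [natDegree_map_eq_of_injective Int.cast_injective]
  exact natDegree_hermite

theorem Hr_monic (n : ℕ) : (Hr n).Monic := (hermite_monic n).map _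

lemma integrable_pow_gauss {b : ℝ} (hb : 0 < b) (n : ℕ) :
    Integrable (fun x : ℝ => x ^ n * Real.exp (-b * x ^ 2)) := by
  have hn : (-1:ℝ) < n := lt_of_lt_of_le (by norm_num) (Nat.cast_nonneg n)
  simpa [Real.rpow_natCast] using integrable_rpow_mul_exp_neg_mul_sq hb hn

lemma integrable_poly_gauss {b : ℝ} (hb : 0 < b) (q : ℝ[X]) :
    Integrable (fun x : ℝ => q.eval x * Real.exp (-b * x ^ 2)) := by
  have he : (fun x : ℝ => q.eval x * Real.exp (-b * x ^ 2))
      = fun x => ∑ i ∈ Finset.range (q.natDegree + 1),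
          q.coeff i * (x ^ i * Real.exp (-b * x^2)) := by
    funext x
    rw [Polynomial.eval_eq_sum_range, Finset.sum_mul]
    simp [mul_assoc]
  rw [he]
  exact integrable_finset_sum _ fun i _ => ((integrable_pow_gauss hb i).const_mul _)

lemma tendsto_pow_gauss {b : ℝ} (hb : 0 < b) (i : ℕ) :
    Tendsto (fun x : ℝ => x ^ i * Real.exp (-b * x ^ 2)) atTop (nhds 0) := by
  have hcomp : Tendsto (fun x : ℝ => (b*x)^i * Real.exp (-(b*x))) atTop (nhds 0) :=
    (Real.tendsto_pow_mul_exp_neg_atTop_nhds_zero i).comp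
      (tendsto_id.const_mul_atTop hb)
  have hlin : Tendsto (fun x : ℝ => x ^ i * Real.exp (-(b*x))) atTop (nhds 0) := by
    have := hcomp.const_mul ((b⁻¹)^i)
    rw [mul_zero] at this
    refine this.congr fun x => ?_
    rw [mul_pow]
    field_simp
    ring_nf
    rw [← mul_pow, mul_inv_cancel₀ hb.ne', one_pow, one_mul]
  refine tendsto_of_tendsto_of_tendsto_of_le_of_le' tendsto_const_nhds hlin ?_ ?_
  · filter_upwards [eventually_ge_atTop (1:ℝ)] with x hx
    positivity
  · filter_upwards [eventually_ge_atTop (1:ℝ)] with x hx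
    have h1 : -b * x^2 ≤ -(b*x) := by nlinarith [mul_le_mul_of_nonneg_left (mul_le_mul_of_nonneg_right hx (le_trans zero_le_one hx)) hb.le]
    exact mul_le_mul_of_nonneg_left (Real.exp_le_exp.2 h1) (by positivity)

lemma tendsto_poly_gauss_top {b : ℝ} (hb : 0 < b) (q : ℝ[X]) :
    Tendsto (fun x : ℝ => q.eval x * Real.exp (-b * x ^ 2)) atTop (nhds 0) := by
  have he : (fun x : ℝ => q.eval x * Real.exp (-b * x ^ 2))
      = fun x => ∑ i ∈ Finset.range (q.natDegree + 1),
          q.coeff i * (x ^ i * Real.exp (-b * x^2)) := by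
    funext x
    rw [Polynomial.eval_eq_sum_range, Finset.sum_mul]
    simp [mul_assoc]
  rw [he]
  have : Tendsto (fun x : ℝ => ∑ i ∈ Finset.range (q.natDegree + 1),
      q.coeff i * (x ^ i * Real.exp (-b * x^2))) atTop
      (nhds (∑ i ∈ Finset.range (q.natDegree + 1), q.coeff i * 0)) :=
    tendsto_finset_sum _ fun i _ => (tendsto_pow_gauss hb i).const_mul _
  simpa using this

lemma tendsto_poly_gauss_bot {b : ℝ} (hb : 0 < b) (q : ℝ[X]) :
    Tendsto (fun x : ℝ => q.eval x * Real.exp (-b * x ^ 2)) atBot (nhds 0) := by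
  have h := tendsto_poly_gauss_top hb (q.comp (-X))
  have he : (fun x : ℝ => q.eval x * Real.exp (-b * x ^ 2))
      = (fun y : ℝ => (q.comp (-X)).eval y * Real.exp (-b * y ^ 2)) ∘ (fun x => -x) := by
    funext x
    simp [Polynomial.eval_comp]
  rw [he]
  exact h.comp tendsto_neg_atBot_atTop

lemma gaussianPDFReal_zero_eq (v : ℝ≥0) (x : ℝ) :
    gaussianPDFReal 0 v x
      = (Real.sqrt (2 * Real.pi * v))⁻¹ * Real.exp (-(2 * (v:ℝ))⁻¹ * x ^ 2) := by
  simp only [gaussianPDFReal, sub_zero]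
  congr 1
  ring

lemma integrable_poly_pdf {v : ℝ≥0} (hv : v ≠ 0) (q : ℝ[X]) :
    Integrable (fun x : ℝ => q.eval x * gaussianPDFReal 0 v x) := by
  have hvr : (0:ℝ) < v := by
    have := hv
    positivity
  have hb : (0:ℝ) < (2 * (v:ℝ))⁻¹ := by positivity
  have h := (integrable_poly_gauss hb q).const_mul ((Real.sqrt (2 * Real.pi * v))⁻¹)
  refine h.congr ?_
  filter_upwards with x
  rw [gaussianPDFReal_zero_eq]
  ring

lemma integrable_eval_gaussianReal (v : ℝ≥0) (q : ℝ[X]) :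
    Integrable (fun x => q.eval x) (gaussianReal 0 v) := by
  rcases eq_or_ne v 0 with rfl | hv
  · rw [gaussianReal_zero_var]
    have hae : ∀ᵐ x ∂(Measure.dirac (0:ℝ)), q.eval 0 = q.eval x := by
      rw [MeasureTheory.ae_dirac_iff (measurableSet_eq_fun measurable_const (q.continuous.measurable))]
    exact (integrable_const _).congr hae
  · rw [gaussianReal_of_var_ne_zero _ hv, gaussianPDF_def]
    rw [integrable_withDensity_iff ((measurable_gaussianPDFReal 0 v).ennreal_ofReal)
      (Filter.Eventually.of_forall fun x => ENNReal.ofReal_lt_top)]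
    refine (integrable_poly_pdf hv q).congr ?_
    filter_upwards with x
    rw [ENNReal.toReal_ofReal (gaussianPDFReal_nonneg 0 v x)]

lemma integral_gaussianReal_eq {v : ℝ≥0} (hv : v ≠ 0) (g : ℝ → ℝ) :
    ∫ x, g x ∂(gaussianReal 0 v) = ∫ x, g x * gaussianPDFReal 0 v x := by
  rw [gaussianReal_of_var_ne_zero _ hv, gaussianPDF_def]
  have hd : (fun x => ENNReal.ofReal (gaussianPDFReal 0 v x))
      = fun x => ((Real.toNNReal (gaussianPDFReal 0 v x) : ℝ≥0) : ℝ≥0∞) := rfl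
  rw [hd, integral_withDensity_eq_integral_smul
    ((measurable_gaussianPDFReal 0 v).real_toNNReal)]
  congr 1
  funext x
  rw [NNReal.smul_def, Real.coe_toNNReal _ (gaussianPDFReal_nonneg 0 v x), smul_eq_mul]
  ring

lemma stein (v : ℝ≥0) (q : ℝ[X]) :
    ∫ x, (C (v:ℝ) * derivative q - X * q).eval x ∂(gaussianReal 0 v) = 0 := by
  rcases eq_or_ne v 0 with rfl | hv
  · rw [gaussianReal_zero_var, integral_dirac]
    simp
  · have hvr : (0:ℝ) < v := by
      have := hv
      positivity
    set b : ℝ := (2 * (v:ℝ))⁻¹ with hbdef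
    have hb : (0:ℝ) < b := by positivity
    set c : ℝ := (Real.sqrt (2 * Real.pi * v))⁻¹ with hcdef
    set r : ℝ[X] := C (v:ℝ) * derivative q - X * q with hrdef
    set F : ℝ → ℝ := fun x => (v:ℝ) * c * (q.eval x * Real.exp (-b * x^2)) with hFdef
    set g : ℝ → ℝ := fun x => r.eval x * gaussianPDFReal 0 v x with hgdef
    have hpdf : ∀ x : ℝ, gaussianPDFReal 0 v x = c * Real.exp (-b * x ^ 2) :=
      fun x => gaussianPDFReal_zero_eq v x
    have hg_int : Integrable g := by
      have h := (integrable_poly_gauss hb r).const_mul c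
      refine h.congr ?_
      filter_upwards with x
      rw [hgdef]
      simp only
      rw [hpdf x]
      ring
    have hFderiv : ∀ x : ℝ, HasDerivAt F (g x) x := by
      intro x
      have h1 : HasDerivAt (fun x : ℝ => -b * x^2) (-b * (2 * x^1)) x :=
        (hasDerivAt_pow 2 x).const_mul (-b)
      have h2 : HasDerivAt (fun x : ℝ => Real.exp (-b * x^2))
          (Real.exp (-b * x^2) * (-b * (2 * x^1))) x := h1.exp
      have h3 := ((q.hasDerivAt x).mul h2).const_mul ((v:ℝ) * c)
      refine h3.congr_deriv (Eq.symm ?_)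
      rw [hgdef]
      simp only
      rw [hpdf x, hrdef]
      simp only [eval_sub, eval_mul, eval_C, eval_X, pow_one]
      have hkey : (v:ℝ) * (-b * (2 * x ^ 1)) = -x := by
        rw [hbdef]
        field_simp
      linear_combination (-(c * eval x q * Real.exp (-b * x ^ 2))) * hkey
    have htop : Tendsto F atTop (nhds 0) := by
      have := (tendsto_poly_gauss_top hb q).const_mul ((v:ℝ) * c)
      rw [mul_zero] at this
      exact this
    have hbot : Tendsto F atBot (nhds 0) := by
      have := (tendsto_poly_gauss_bot hb q).const_mul ((v:ℝ) * c)
      rw [mul_zero] at this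
      exact this
    have hIic : ∫ x in Set.Iic (0:ℝ), g x = F 0 - 0 :=
      integral_Iic_of_hasDerivAt_of_tendsto' (fun x _ => hFderiv x)
        (hg_int.integrableOn) hbot
    have hIoi : ∫ x in Set.Ioi (0:ℝ), g x = 0 - F 0 :=
      integral_Ioi_of_hasDerivAt_of_tendsto' (fun x _ => hFderiv x)
        (hg_int.integrableOn) htop
    have hsplit : (∫ x in Set.Iic (0:ℝ), g x) + ∫ x in Set.Ioi (0:ℝ), g x = ∫ x, g x := by
      rw [← Set.compl_Iic]
      exact integral_add_compl measurableSet_Iic hg_int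
    rw [integral_gaussianReal_eq hv]
    have : ∫ x, r.eval x * gaussianPDFReal 0 v x = ∫ x, g x := rfl
    rw [this, ← hsplit, hIic, hIoi]
    ring

noncomputable def Ig (v : ℝ≥0) (p : ℝ[X]) : ℝ := ∫ x, p.eval x ∂(gaussianReal 0 v)

lemma Ig_add (v : ℝ≥0) (p q : ℝ[X]) : Ig v (p + q) = Ig v p + Ig v q := by
  unfold Ig
  simp only [eval_add]
  exact integral_add (integrable_eval_gaussianReal v p) (integrable_eval_gaussianReal v q)

lemma Ig_sub (v : ℝ≥0) (p q : ℝ[X]) : Ig v (p - q) = Ig v p - Ig v q := by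
  unfold Ig
  simp only [eval_sub]
  exact integral_sub (integrable_eval_gaussianReal v p) (integrable_eval_gaussianReal v q)

lemma Ig_Cmul (v : ℝ≥0) (a : ℝ) (p : ℝ[X]) : Ig v (C a * p) = a * Ig v p := by
  unfold Ig
  simp only [eval_mul, eval_C]
  exact integral_const_mul a _

lemma Ig_C (v : ℝ≥0) (a : ℝ) : Ig v (C a) = a := by
  unfold Ig
  simp [eval_C]

lemma Ig_zero (v : ℝ≥0) : Ig v 0 = 0 := by
  unfold Ig; simp

lemma Ig_one (v : ℝ≥0) : Ig v 1 = 1 := by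
  have := Ig_C v 1
  rwa [map_one] at this

lemma Ig_smul (v : ℝ≥0) (a : ℝ) (p : ℝ[X]) : Ig v (a • p) = a * Ig v p := by
  rw [smul_eq_C_mul, Ig_Cmul]

lemma Ig_sum (v : ℝ≥0) {ι : Type*} (s : Finset ι) (f : ι → ℝ[X]) :
    Ig v (∑ i ∈ s, f i) = ∑ i ∈ s, Ig v (f i) := by
  unfold Ig
  simp only [eval_finset_sum]
  exact integral_finset_sum s fun i _ => integrable_eval_gaussianReal v (f i)

lemma Ig_X_mul (v : ℝ≥0) (p : ℝ[X]) : Ig v (X * p) = (v:ℝ) * Ig v (derivative p) := by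
  have h := stein v p
  have h2 : Ig v (C (v:ℝ) * derivative p - X * p) = 0 := h
  rw [Ig_sub, Ig_Cmul] at h2
  linarith

lemma Hr_rep (n : ℕ) (q : ℝ[X]) : Ig 1 (Hr n * q) = Ig 1 (derivative^[n] q) := by
  induction n generalizing q with
  | zero => rw [Hr_zero, one_mul, Function.iterate_zero_apply]
  | succ n ih =>
    have step : Ig 1 (Hr (n+1) * q) = Ig 1 (Hr n * derivative q) := by
      rw [Hr_succ, sub_mul, Ig_sub, mul_assoc, Ig_X_mul, derivative_mul, Ig_add]
      push_cast
      ring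
    rw [step, ih (derivative q), Function.iterate_succ_apply]

lemma iterate_deriv_Hr_self (n : ℕ) : derivative^[n] (Hr n) = C (n.factorial : ℝ) := by
  have hdeg : (derivative^[n] (Hr n)).natDegree = 0 := by
    have := natDegree_iterate_derivative (Hr n) n
    rw [Hr_natDegree] at this
    omega
  have hco : (derivative^[n] (Hr n)).coeff 0 = (n.factorial : ℝ) := by
    rw [coeff_iterate_derivative]
    simp only [zero_add]
    rw [Nat.descFactorial_self]
    have h1 : (Hr n).coeff n = 1 := by
      have := (Hr_monic n).coeff_natDegree
      rwa [Hr_natDegree] at this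
    rw [h1, nsmul_eq_mul, mul_one]
  rw [eq_C_of_natDegree_le_zero hdeg.le, hco]

lemma Ig_Hr_mul_Hr (n m : ℕ) : Ig 1 (Hr n * Hr m) = if n = m then (n.factorial : ℝ) else 0 := by
  rcases lt_trichotomy n m with h | rfl | h
  · rw [if_neg h.ne]
    rw [mul_comm, Hr_rep]
    rw [iterate_derivative_eq_zero (by rw [Hr_natDegree]; exact h), Ig_zero]
  · rw [if_pos rfl, Hr_rep, iterate_deriv_Hr_self, Ig_C]
  · rw [if_neg h.ne', Hr_rep]
    rw [iterate_derivative_eq_zero (by rw [Hr_natDegree]; exact h), Ig_zero]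

lemma Ig_Hr (n : ℕ) : Ig 1 (Hr n) = if n = 0 then 1 else 0 := by
  cases n with
  | zero => rw [Hr_zero, Ig_one, if_pos rfl]
  | succ n =>
    rw [if_neg (Nat.succ_ne_zero n)]
    have := Hr_rep (n+1) 1
    rw [mul_one] at this
    rw [this, iterate_derivative_eq_zero (by simp), Ig_zero]

lemma hermite_span : ∀ (n : ℕ) (p : ℝ[X]), p.natDegree ≤ n →
    ∃ c : ℕ → ℝ, p = ∑ i ∈ Finset.range (n+1), C (c i) * Hr i := by
  intro n
  induction n with
  | zero =>
    intro p hp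
    refine ⟨fun _ => p.coeff 0, ?_⟩
    rw [Finset.range_one, Finset.sum_singleton, Hr_zero, mul_one]
    exact eq_C_of_natDegree_le_zero hp
  | succ n ih =>
    intro p hp
    set q := p - C (p.coeff (n+1)) * Hr (n+1) with hq
    have hHrco : (Hr (n+1)).coeff (n+1) = 1 := by
      have := (Hr_monic (n+1)).coeff_natDegree
      rwa [Hr_natDegree] at this
    have hqdeg : q.natDegree ≤ n := by
      rw [natDegree_le_iff_coeff_eq_zero]
      intro m hm
      rw [hq, coeff_sub, coeff_C_mul]
      rcases eq_or_lt_of_le (Nat.succ_le_of_lt hm) with h | h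
      · rw [← h, hHrco, mul_one, sub_self]
      · have e1 : p.coeff m = 0 := coeff_eq_zero_of_natDegree_lt (lt_of_le_of_lt hp h)
        have e2 : (Hr (n+1)).coeff m = 0 := by
          refine coeff_eq_zero_of_natDegree_lt ?_
          rw [Hr_natDegree]
          exact h
        rw [e1, e2]
        simp
    obtain ⟨c, hc⟩ := ih q hqdeg
    refine ⟨Function.update c (n+1) (p.coeff (n+1)), ?_⟩
    rw [Finset.sum_range_succ, Function.update_self]
    have hsum : ∑ i ∈ Finset.range (n+1), C (Function.update c (n+1) (p.coeff (n+1)) i) * Hr i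
        = ∑ i ∈ Finset.range (n+1), C (c i) * Hr i := by
      refine Finset.sum_congr rfl fun i hi => ?_
      rw [Function.update_of_ne (by simp at hi; omega)]
    rw [hsum, ← hc, hq]
    ring

lemma ou_pointwise {δ : ℝ} (hδ0 : 0 < δ) (hδ1 : δ ≤ 1) (n : ℕ) (u : ℝ) :
    Ig (Real.toNNReal (1-δ)) ((Hr n).comp (C (Real.sqrt δ * u) + X))
      = (Real.sqrt δ)^n * (Hr n).eval u := by
  set ρ := Real.sqrt δ with hρ
  set v' := Real.toNNReal (1-δ) with hv'
  have hvr : ((v':ℝ≥0):ℝ) = 1 - δ := Real.coe_toNNReal _ (by linarith)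
  have hρ2 : ρ * ρ = δ := Real.mul_self_sqrt hδ0.le
  -- pairwise induction
  suffices h : ∀ m : ℕ, (∀ u : ℝ, Ig v' ((Hr m).comp (C (ρ * u) + X)) = ρ^m * (Hr m).eval u)
      ∧ (∀ u : ℝ, Ig v' ((Hr (m+1)).comp (C (ρ * u) + X)) = ρ^(m+1) * (Hr (m+1)).eval u) by
    exact (h n).1 u
  intro m
  have base0 : ∀ u : ℝ, Ig v' ((Hr 0).comp (C (ρ * u) + X)) = ρ^0 * (Hr 0).eval u := by
    intro u
    rw [Hr_zero, one_comp, Ig_one]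
    simp
  have base1 : ∀ u : ℝ, Ig v' ((Hr 1).comp (C (ρ * u) + X)) = ρ^1 * (Hr 1).eval u := by
    intro u
    rw [Hr_one, X_comp, Ig_add, Ig_C]
    have hX : Ig v' X = 0 := by
      have := Ig_X_mul v' 1
      rw [mul_one, derivative_one, Ig_zero, mul_zero] at this
      exact this
    rw [hX, eval_X, pow_one, add_zero]
  induction m with
  | zero => exact ⟨base0, base1⟩
  | succ m ih =>
    refine ⟨ih.2, fun u => ?_⟩
    set L : ℝ[X] := C (ρ * u) + X with hL
    have hLd : derivative L = 1 := by
      rw [hL, derivative_add, derivative_C, derivative_X, zero_add]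
    have hcomp : (Hr (m+2)).comp L
        = C (ρ * u) * ((Hr (m+1)).comp L) + X * ((Hr (m+1)).comp L)
          - ((m:ℝ)+1) • ((Hr m).comp L) := by
      rw [Hr_succ (m+1), sub_comp, mul_comp, X_comp, Hr_deriv, smul_comp, hL]
      ring
    have hdK : derivative ((Hr (m+1)).comp L) = ((m:ℝ)+1) • ((Hr m).comp L) := by
      rw [derivative_comp, hLd, one_mul, Hr_deriv, smul_comp]
    have e1 := ih.1 u
    have e2 := ih.2 u
    rw [← hL] at e1 e2
    rw [hcomp, Ig_sub, Ig_add, Ig_Cmul, Ig_X_mul, hdK, Ig_smul, e1, e2]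
    have heval : (Hr (m+2)).eval u = u * (Hr (m+1)).eval u - ((m:ℝ)+1) * (Hr m).eval u := by
      rw [Hr_succ (m+1), eval_sub, eval_mul, eval_X, Hr_deriv, eval_smul, smul_eq_mul]
    rw [heval, hvr]
    push_cast
    linear_combination (((m:ℝ)+1) * eval u (Hr m) * ρ^m) * hρ2

lemma integrable_eval_A {A : Measure ℝ} {m' : ℕ}
    (hint : ∀ i : ℕ, i ≤ m' → Integrable (fun x => x ^ i) A)
    (q : ℝ[X]) (hq : q.natDegree ≤ m') : Integrable (fun x => q.eval x) A := by
  have he : (fun x : ℝ => q.eval x)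
      = fun x => ∑ i ∈ Finset.range (m'+1), q.coeff i * x ^ i := by
    funext x
    exact eval_eq_sum_range' (Nat.lt_succ_of_le hq) x
  rw [he]
  exact integrable_finset_sum _ fun i hi =>
    (hint i (Nat.lt_succ_iff.mp (Finset.mem_range.mp hi))).const_mul _

lemma integrable_eval_prod {A : Measure ℝ} [IsProbabilityMeasure A] {m' : ℕ}
    (hint : ∀ i : ℕ, i ≤ m' → Integrable (fun x => x ^ i) A)
    (v : ℝ≥0) (ρ : ℝ) (q : ℝ[X]) (hq : q.natDegree ≤ m') :
    Integrable (fun z : ℝ × ℝ => q.eval (ρ * z.1 + z.2)) (A.prod (gaussianReal 0 v)) := by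
  have he : (fun z : ℝ × ℝ => q.eval (ρ * z.1 + z.2))
      = fun z => ∑ i ∈ Finset.range (m' + 1), ∑ k ∈ Finset.range (i + 1),
          (q.coeff i * (ρ^k * (i.choose k))) * (z.1 ^ k * z.2 ^ (i - k)) := by
    funext z
    rw [eval_eq_sum_range' (Nat.lt_succ_of_le hq)]
    refine Finset.sum_congr rfl fun i _ => ?_
    rw [add_pow, Finset.mul_sum]
    refine Finset.sum_congr rfl fun k _ => ?_
    rw [mul_pow]
    ring
  rw [he]
  refine integrable_finset_sum _ fun i hi => integrable_finset_sum _ fun k hk => ?_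
  have hkm : k ≤ m' := by
    simp only [Finset.mem_range] at hi hk
    omega
  have h1 : Integrable (fun x : ℝ => x ^ k) A := hint k hkm
  have h2 : Integrable (fun y : ℝ => y ^ (i-k)) (gaussianReal 0 v) := by
    refine (integrable_eval_gaussianReal v (X ^ (i-k))).congr ?_
    filter_upwards with y
    simp
  exact (h1.mul_prod h2).const_mul _

end OUAux

section Main
open Polynomial Filter
open scoped NNReal ENNReal

/-- Moment-matching transfer through the Ornstein–Uhlenbeck operator: if
`B = U_{√δ} A` approximately matches unit-norm polynomials of degree `≤ m'` with error
`lam`, then `A` matches them with error `√(m') · lam · δ^{-m'/2}`. -/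
theorem ou_moment_transfer (δ : ℝ) (hδ0 : 0 < δ) (hδ1 : δ ≤ 1) (m' : ℕ) (lam : ℝ)
    (A : Measure ℝ) [IsProbabilityMeasure A]
    (hint : ∀ i : ℕ, i ≤ m' → Integrable (fun x => x ^ i) A)
    (B : Measure ℝ)
    (hB : B = Measure.conv (A.map fun x => Real.sqrt δ * x)
      (gaussianReal 0 (Real.toNNReal (1 - δ))))
    (hmatch : ∀ p : Polynomial ℝ, p.natDegree ≤ m' →
      (∫ x, (p.eval x) ^ 2 ∂(gaussianReal 0 1)) = 1 →
      |(∫ x, p.eval x ∂B) - ∫ x, p.eval x ∂(gaussianReal 0 1)| ≤ lam) :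
    ∀ p : Polynomial ℝ, p.natDegree ≤ m' →
      (∫ x, (p.eval x) ^ 2 ∂(gaussianReal 0 1)) = 1 →
      |(∫ x, p.eval x ∂A) - ∫ x, p.eval x ∂(gaussianReal 0 1)| ≤
        Real.sqrt m' * lam * δ ^ (-(m' : ℝ) / 2) := by
  intro p hdeg hnorm
  set ρ := Real.sqrt δ with hρdef
  have hρpos : 0 < ρ := Real.sqrt_pos.mpr hδ0
  set v' := Real.toNNReal (1 - δ) with hv'def
  set γ' := gaussianReal 0 v' with hγ'def
  -- B as a map of the product measure
  have hρmeas : Measurable fun x : ℝ => ρ * x := measurable_id.const_mul ρ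
  have hφmeas : Measurable (fun z : ℝ × ℝ => ρ * z.1 + z.2) :=
    (measurable_fst.const_mul ρ).add measurable_snd
  have hBmap : B = (A.prod γ').map (fun z : ℝ × ℝ => ρ * z.1 + z.2) := by
    haveI : IsProbabilityMeasure (A.map fun x : ℝ => ρ * x) :=
      Measure.isProbabilityMeasure_map hρmeas.aemeasurable
    rw [hB]
    show Measure.map (fun z : ℝ × ℝ => z.1 + z.2) (((A.map fun x => ρ * x)).prod γ') = _
    have h1 : (A.map fun x : ℝ => ρ * x).prod γ'
        = (A.prod γ').map (Prod.map (fun x : ℝ => ρ * x) id) := by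
      calc (A.map fun x : ℝ => ρ * x).prod γ'
          = (A.map fun x : ℝ => ρ * x).prod (γ'.map id) := by rw [Measure.map_id]
        _ = (A.prod γ').map (Prod.map (fun x : ℝ => ρ * x) id) :=
            Measure.map_prod_map _ _ hρmeas measurable_id
    rw [h1, Measure.map_map (g := fun z : ℝ × ℝ => z.1 + z.2) (measurable_fst.add measurable_snd) (hρmeas.prodMap measurable_id)]
    rfl
  haveI : IsProbabilityMeasure B := by
    rw [hBmap]
    exact Measure.isProbabilityMeasure_map hφmeas.aemeasurable
  -- B integrals through the product
  have hBint : ∀ q : ℝ[X],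
      ∫ u, q.eval u ∂B = ∫ z : ℝ × ℝ, q.eval (ρ * z.1 + z.2) ∂(A.prod γ') := by
    intro q
    rw [hBmap, integral_map hφmeas.aemeasurable q.continuous.aestronglyMeasurable]
  -- OU action on Hermite moments
  set e : ℕ → ℝ := fun i => ∫ x, (Hr i).eval x ∂A with hedef
  have hOU : ∀ n : ℕ, n ≤ m' → ∫ u, (Hr n).eval u ∂B = ρ^n * e n := by
    intro n hn
    rw [hBint (Hr n)]
    have hip : Integrable (fun z : ℝ × ℝ => (Hr n).eval (ρ * z.1 + z.2)) (A.prod γ') :=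
      integrable_eval_prod hint v' ρ (Hr n) (by rw [Hr_natDegree]; exact hn)
    rw [integral_prod _ hip]
    have hinner : ∀ x : ℝ, (∫ w, (Hr n).eval (ρ * x + w) ∂γ') = ρ^n * (Hr n).eval x := by
      intro x
      have h := ou_pointwise hδ0 hδ1 n x
      calc (∫ w, (Hr n).eval (ρ * x + w) ∂γ')
          = ∫ w, ((Hr n).comp (C (ρ * x) + X)).eval w ∂γ' := by
            congr 1
            funext w
            simp [eval_comp]
        _ = ρ^n * (Hr n).eval x := h
    simp_rw [hinner]
    exact integral_const_mul _ _
  -- expansion of p in Hermite basis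
  obtain ⟨c, hc⟩ := hermite_span m' p hdeg
  have hIA : ∫ x, p.eval x ∂A = ∑ i ∈ Finset.range (m'+1), c i * e i := by
    rw [hc]
    simp only [eval_finset_sum, eval_mul, eval_C]
    rw [integral_finset_sum _ (fun i hi => (integrable_eval_A hint (Hr i)
      (by rw [Hr_natDegree]; simp only [Finset.mem_range] at hi; omega)).const_mul _)]
    exact Finset.sum_congr rfl fun i _ => integral_const_mul _ _
  have hIγ : ∫ x, p.eval x ∂(gaussianReal 0 1) = c 0 := by
    show Ig 1 p = c 0
    rw [hc, Ig_sum]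
    rw [Finset.sum_eq_single 0]
    · rw [Ig_Cmul, Ig_Hr, if_pos rfl, mul_one]
    · intro i _ hi
      rw [Ig_Cmul, Ig_Hr, if_neg hi, mul_zero]
    · intro h
      exact absurd (Finset.mem_range.mpr (Nat.succ_pos m')) h
  -- the norm identity
  have hnorm2 : ∑ i ∈ Finset.range (m'+1), (c i)^2 * (i.factorial : ℝ) = 1 := by
    rw [← hnorm]
    have h1 : ∫ x, (p.eval x)^2 ∂(gaussianReal 0 1) = Ig 1 (p * p) := by
      unfold Ig
      congr 1
      funext x
      rw [eval_mul, sq]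
    have key : Ig 1 (p * p) = ∑ i ∈ Finset.range (m'+1), (c i)^2 * (i.factorial : ℝ) := by
      nth_rewrite 1 [hc]
      nth_rewrite 1 [hc]
      rw [Finset.sum_mul_sum, Ig_sum]
      refine Finset.sum_congr rfl fun i hi => ?_
      rw [Ig_sum, Finset.sum_eq_single i]
      · have hm : (C (c i) * Hr i) * (C (c i) * Hr i) = C (c i * c i) * (Hr i * Hr i) := by
          rw [map_mul]
          ring
        rw [hm, Ig_Cmul, Ig_Hr_mul_Hr, if_pos rfl]
        ring
      · intro j _ hj
        have hm : (C (c i) * Hr i) * (C (c j) * Hr j) = C (c i * c j) * (Hr i * Hr j) := by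
          rw [map_mul]
          ring
        rw [hm, Ig_Cmul, Ig_Hr_mul_Hr, if_neg (fun h => hj h.symm), mul_zero]
      · intro h
        exact absurd hi h
    rw [h1, key]
  -- lam is nonnegative
  have hlam0 : 0 ≤ lam := by
    have h1 := hmatch 1 (by simp) (by simp)
    simpa using h1
  have he0 : e 0 = 1 := by
    rw [hedef]
    simp [Hr_zero]
  -- bound on Hermite moments of A
  have hebound : ∀ i : ℕ, 1 ≤ i → i ≤ m' →
      |e i| * (ρ^i * (Real.sqrt (i.factorial))⁻¹) ≤ lam := by
    intro i hi1 hi2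
    set a : ℝ := (Real.sqrt (i.factorial))⁻¹ with ha
    have hfac : (0:ℝ) < i.factorial := by
      exact_mod_cast i.factorial_pos
    have hapos : 0 < a := by positivity
    have hd : (C a * Hr i).natDegree ≤ m' := by
      rw [natDegree_C_mul (ne_of_gt hapos), Hr_natDegree]
      exact hi2
    have hn : ∫ x, ((C a * Hr i).eval x)^2 ∂(gaussianReal 0 1) = 1 := by
      have h1' : ∫ x, ((C a * Hr i).eval x)^2 ∂(gaussianReal 0 1)
          = Ig 1 ((C a * Hr i) * (C a * Hr i)) := by
        unfold Ig
        congr 1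
        funext x
        simp [eval_mul, sq]
      rw [h1']
      have hm : (C a * Hr i) * (C a * Hr i) = C (a * a) * (Hr i * Hr i) := by
        rw [map_mul]
        ring
      have haa : a * a = ((i.factorial : ℝ))⁻¹ := by
        rw [ha, ← mul_inv, Real.mul_self_sqrt (le_of_lt hfac)]
      rw [hm, Ig_Cmul, Ig_Hr_mul_Hr, if_pos rfl, haa]
      field_simp
    have hb := hmatch (C a * Hr i) hd hn
    have hgam0 : ∫ x, (C a * Hr i).eval x ∂(gaussianReal 0 1) = 0 := by
      show Ig 1 (C a * Hr i) = 0
      rw [Ig_Cmul, Ig_Hr, if_neg (by omega), mul_zero]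
    have hBv : ∫ x, (C a * Hr i).eval x ∂B = a * (ρ^i * e i) := by
      simp only [eval_mul, eval_C]
      rw [integral_const_mul, hOU i hi2]
    rw [hgam0, hBv, sub_zero] at hb
    calc |e i| * (ρ^i * a) = |a * (ρ^i * e i)| := by
          rw [abs_mul, abs_mul, abs_of_pos hapos, abs_of_pos (pow_pos hρpos i)]
          ring
      _ ≤ lam := hb
  -- the difference as a sum over nonconstant Hermite coefficients
  have hdiff : ∫ x, p.eval x ∂A - ∫ x, p.eval x ∂(gaussianReal 0 1)
      = ∑ i ∈ Finset.Ico 1 (m'+1), c i * e i := by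
    rw [hIA, hIγ]
    rw [Finset.range_eq_Ico, Finset.sum_eq_sum_Ico_succ_bot (Nat.succ_pos m')]
    rw [he0]
    ring
  -- Cauchy-Schwarz
  have hCS := Finset.sum_mul_sq_le_sq_mul_sq (Finset.Ico 1 (m'+1))
    (fun i => c i * Real.sqrt (i.factorial)) (fun i => e i * (Real.sqrt (i.factorial))⁻¹)
  have hfg : ∀ i ∈ Finset.Ico 1 (m'+1),
      (c i * Real.sqrt (i.factorial)) * (e i * (Real.sqrt (i.factorial))⁻¹) = c i * e i := by
    intro i _
    have hfac : (0:ℝ) < i.factorial := by exact_mod_cast i.factorial_pos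
    have : Real.sqrt (i.factorial) ≠ 0 := by positivity
    field_simp
  rw [Finset.sum_congr rfl hfg] at hCS
  have hS1 : ∑ i ∈ Finset.Ico 1 (m'+1), (c i * Real.sqrt (i.factorial))^2 ≤ 1 := by
    rw [← hnorm2]
    have heq : ∀ i ∈ Finset.Ico 1 (m'+1),
        (c i * Real.sqrt (i.factorial))^2 = (c i)^2 * (i.factorial : ℝ) := by
      intro i _
      rw [mul_pow, Real.sq_sqrt (by positivity)]
    rw [Finset.sum_congr rfl heq]
    refine Finset.sum_le_sum_of_subset_of_nonneg ?_ ?_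
    · intro i hi
      simp only [Finset.mem_Ico] at hi
      simp only [Finset.mem_range]
      omega
    · intro i _ _
      positivity
  have hS2 : ∑ i ∈ Finset.Ico 1 (m'+1), (e i * (Real.sqrt (i.factorial))⁻¹)^2
      ≤ (m' : ℝ) * (lam^2 * (δ^m')⁻¹) := by
    have hcard : (Finset.Ico 1 (m'+1)).card = m' := by
      simp [Nat.card_Ico]
    have hbd : ∀ i ∈ Finset.Ico 1 (m'+1),
        (e i * (Real.sqrt (i.factorial))⁻¹)^2 ≤ lam^2 * (δ^m')⁻¹ := by
      intro i hi
      simp only [Finset.mem_Ico] at hi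
      obtain ⟨hi1, hi2⟩ := hi
      have hi2' : i ≤ m' := by omega
      have hE := hebound i hi1 hi2'
      set a : ℝ := (Real.sqrt (i.factorial))⁻¹ with ha
      have hfac : (0:ℝ) < i.factorial := by exact_mod_cast i.factorial_pos
      have hapos : 0 < a := by positivity
      have hsq : (|e i| * (ρ^i * a))^2 ≤ lam^2 := by
        refine pow_le_pow_left₀ (by positivity) hE 2
      have hsplit : (|e i| * (ρ^i * a))^2 = (e i * a)^2 * (ρ^i)^2 := by
        rw [mul_pow, mul_pow, mul_pow, sq_abs]
        ring
      rw [hsplit] at hsq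
      have hρi : (ρ^i)^2 = δ^i := by
        rw [← pow_mul, mul_comm i 2, pow_mul, Real.sq_sqrt hδ0.le]
      rw [hρi] at hsq
      have hδi : (0:ℝ) < δ^i := pow_pos hδ0 i
      have h1 : (e i * a)^2 ≤ lam^2 * (δ^i)⁻¹ := by
        have := (le_div_iff₀ hδi).mpr hsq
        rwa [div_eq_mul_inv] at this
      refine h1.trans ?_
      have hmono : δ^m' ≤ δ^i := pow_le_pow_of_le_one hδ0.le hδ1 hi2'
      have : (δ^i)⁻¹ ≤ (δ^m')⁻¹ := by
        apply inv_anti₀ (pow_pos hδ0 m') hmono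
      exact mul_le_mul_of_nonneg_left this (sq_nonneg lam)
    calc ∑ i ∈ Finset.Ico 1 (m'+1), (e i * (Real.sqrt (i.factorial))⁻¹)^2
        ≤ (Finset.Ico 1 (m'+1)).card • (lam^2 * (δ^m')⁻¹) :=
          Finset.sum_le_card_nsmul _ _ _ hbd
      _ = (m' : ℝ) * (lam^2 * (δ^m')⁻¹) := by
          rw [hcard, nsmul_eq_mul]
  -- conclude
  set R : ℝ := Real.sqrt m' * lam * δ ^ (-(m' : ℝ) / 2) with hR
  have hR0 : 0 ≤ R :=
    mul_nonneg (mul_nonneg (Real.sqrt_nonneg _) hlam0) (Real.rpow_nonneg hδ0.le _)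
  have hRsq : R^2 = (m' : ℝ) * (lam^2 * (δ^m')⁻¹) := by
    rw [hR, mul_pow, mul_pow, Real.sq_sqrt (Nat.cast_nonneg m')]
    have hrp : (δ ^ (-(m' : ℝ)/2))^2 = (δ^(m' : ℕ))⁻¹ := by
      rw [← Real.rpow_natCast (δ ^ (-(m' : ℝ)/2)) 2, ← Real.rpow_mul hδ0.le]
      have : -(m' : ℝ)/2 * (2:ℕ) = -(m' : ℝ) := by
        push_cast
        ring
      rw [this, Real.rpow_neg hδ0.le, Real.rpow_natCast]
    rw [hrp]
    ring
  have hfin : (∑ i ∈ Finset.Ico 1 (m'+1), c i * e i)^2 ≤ R^2 := by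
    rw [hRsq]
    calc (∑ i ∈ Finset.Ico 1 (m'+1), c i * e i)^2
        ≤ (∑ i ∈ Finset.Ico 1 (m'+1), (c i * Real.sqrt (i.factorial))^2)
          * ∑ i ∈ Finset.Ico 1 (m'+1), (e i * (Real.sqrt (i.factorial))⁻¹)^2 := hCS
      _ ≤ 1 * ((m' : ℝ) * (lam^2 * (δ^m')⁻¹)) := by
          refine mul_le_mul hS1 hS2 ?_ ?_
          · positivity
          · norm_num
      _ = (m' : ℝ) * (lam^2 * (δ^m')⁻¹) := one_mul _
  rw [hdiff]
  have habs : |∑ i ∈ Finset.Ico 1 (m'+1), c i * e i| ≤ R := by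
    rw [← Real.sqrt_sq_eq_abs]
    have h := Real.sqrt_le_sqrt hfin
    rwa [Real.sqrt_sq hR0] at h
  exact habs

end Main
end
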